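/- arXiv:1910.04361 — 7 statements merged into one kernel-verified Lean document; each statement's English description precedes it below -/
import Mathlib

section
/- Let M be a uniform matroid (every subset of the ground set of size at most r is independent, and no set of size greater than r is independent, where r = r(M)), and let λ be a positive integer. If U is a subset of the ground set of M with λ_M(U) ≤ λ, then the equivalence relation ∼_U on the subsets of U has at most λ + 2 equivalence classes. (Hence the class of uniform matroids is strongly pigeonhole.) -/
open Set

noncomputable def mrank {α : Type*} (M : Matroid α) (X : Set α) : ℕ :=
  sSup {n | ∃ I, I ⊆ X ∧ M.Indep I ∧ I.ncard = n}

lemma arith_key (x z r b c : ℕ) (hc : c = r - min b r) (hzb : z ≤ b) :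
    x + z ≤ r ↔ min x (r+1) - c + z ≤ r - c := by omega

lemma mrank_eq_min {α : Type*} (M : Matroid α) (hfin : M.E.Finite)
    (hunif : ∀ X ⊆ M.E, (M.Indep X ↔ X.ncard ≤ mrank M M.E))
    (S : Set α) (hS : S ⊆ M.E) :
    mrank M S = min S.ncard (mrank M M.E) := by
  have hSfin : S.Finite := hfin.subset hS
  have hset : {n | ∃ I, I ⊆ S ∧ M.Indep I ∧ I.ncard = n} = Set.Iic (min S.ncard (mrank M M.E)) := by
    ext n
    constructor
    · rintro ⟨I, hIS, hI, rfl⟩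
      have h1 : I.ncard ≤ S.ncard := ncard_le_ncard hIS hSfin
      have h2 : I.ncard ≤ mrank M M.E := (hunif I (hIS.trans hS)).1 hI
      exact le_min h1 h2
    · intro hn
      obtain ⟨I, hIS, hIcard⟩ := exists_subset_card_eq (le_trans hn (min_le_left _ _))
      exact ⟨I, hIS, (hunif I (hIS.trans hS)).2 (hIcard ▸ le_trans hn (min_le_right _ _)), hIcard⟩
  rw [mrank, hset, csSup_Iic]

noncomputable def connVal {α : Type*} (M : Matroid α) (U : Set α) : ℕ :=
  mrank M U + mrank M (M.E \ U) - mrank M M.E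

def Sim {α : Type*} (M : Matroid α) (U X X' : Set α) : Prop :=
  ∀ Z ⊆ M.E \ U, (M.Indep (X ∪ Z) ↔ M.Indep (X' ∪ Z))

def SimClassesLE {α : Type*} (M : Matroid α) (U : Set α) (k : ℕ) : Prop :=
  ∃ f : Set α → Fin k, ∀ X X' : Set α, X ⊆ U → X' ⊆ U → f X = f X' → Sim M U X X'

structure Decomp {α : Type*} (M : Matroid α) where
  V : Type
  fin : Finite V
  T : SimpleGraph V
  conn : T.Connected
  acyc : T.IsAcyclic
  deg : ∀ v : V, (T.neighborSet v).ncard = 1 ∨ (T.neighborSet v).ncard = 3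
  leafEquiv : M.E ≃ {v : V // (T.neighborSet v).ncard = 1}

def Decomp.Displays {α : Type*} {M : Matroid α} (D : Decomp M) (U : Set α) : Prop :=
  ∃ u v : D.V, D.T.Adj u v ∧
    U = {x | ∃ h : x ∈ M.E, (D.T.deleteEdges {s(u, v)}).Reachable (D.leafEquiv ⟨x, h⟩).1 u}

def bwLE {α : Type*} (M : Matroid α) (k : ℕ) : Prop :=
  ∃ D : Decomp M, ∀ U, D.Displays U → connVal M U + 1 ≤ k

def dwLE {α : Type*} (M : Matroid α) (k : ℕ) : Prop :=
  ∃ D : Decomp M, ∀ U, D.Displays U → SimClassesLE M U k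

def Pigeonhole {α : Type*} (C : Set (Matroid α)) : Prop :=
  ∀ l : ℕ, 0 < l → ∃ ρ : ℕ, ∀ M ∈ C, bwLE M l → dwLE M ρ

/-- uniform matroids: if λ_M(U) ≤ λ then ∼_U has at most λ + 2 classes. -/
theorem uniform_sim_classes {α : Type*} (M : Matroid α) (hfin : M.E.Finite)
    (hunif : ∀ X ⊆ M.E, (M.Indep X ↔ X.ncard ≤ mrank M M.E))
    (l : ℕ) (hl : 0 < l) (U : Set α) (hU : U ⊆ M.E)
    (hconn : connVal M U ≤ l) :
    SimClassesLE M U (l + 2) := by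
  classical
  set r := mrank M M.E with hr
  set a := U.ncard with ha
  set b := (M.E \ U).ncard with hb
  set c := r - min b r with hc
  -- key bound: min a (r+1) - c ≤ l + 1
  have hconn' : min a r + min b r - r ≤ l := by
    have h1 : mrank M U = min a r := mrank_eq_min M hfin (hr ▸ hunif) U hU
    have h2 : mrank M (M.E \ U) = min b r := mrank_eq_min M hfin (hr ▸ hunif) _ diff_subset
    simpa [connVal, h1, h2] using hconn
  have hYa : ∀ Y : Set α, Y ⊆ U → Y.ncard ≤ a := fun Y hY => by
    rw [ha]; exact ncard_le_ncard hY (hfin.subset hU)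
  have hZball : ∀ Z : Set α, Z ⊆ M.E \ U → Z.ncard ≤ b := fun Z hZ => by
    rw [hb]; exact ncard_le_ncard hZ (hfin.subset diff_subset)
  clear_value r a b c
  have hbound : min a (r + 1) - c ≤ l + 1 := by omega
  refine ⟨fun X => ⟨min (min X.ncard (r + 1) - c) (l + 1), by omega⟩, ?_⟩
  intro X X' hX hX' hf Z hZ
  have hval : ∀ Y : Set α, Y ⊆ U → min (min Y.ncard (r + 1) - c) (l + 1) = min Y.ncard (r + 1) - c := by
    intro Y hY
    have : Y.ncard ≤ a := hYa Y hY
    omega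
  have hfeq : min X.ncard (r + 1) - c = min X'.ncard (r + 1) - c := by
    rw [Fin.mk.injEq, hval X hX, hval X' hX'] at hf
    exact hf
  clear hf
  have hZb : Z.ncard ≤ b := hZball Z hZ
  have key : ∀ Y : Set α, Y ⊆ U → (M.Indep (Y ∪ Z) ↔ min Y.ncard (r + 1) - c + Z.ncard ≤ r - c) := by
    intro Y hY
    have hYE : Y ⊆ M.E := hY.trans hU
    have hsub : Y ∪ Z ⊆ M.E := union_subset hYE (hZ.trans diff_subset)
    have hdisj : Disjoint Y Z := disjoint_of_subset hY hZ disjoint_sdiff_right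
    have hcard : (Y ∪ Z).ncard = Y.ncard + Z.ncard :=
      ncard_union_eq hdisj (hfin.subset hYE) (hfin.subset (hZ.trans diff_subset))
    rw [hunif _ hsub, hcard]
    exact arith_key _ _ _ _ _ hc hZb
  rw [key X hX, key X' hX', hfeq]
end

section
/- Let F be a finite field with q elements and let λ be a positive integer. For every F-representable matroid M and every subset U of its ground set satisfying λ_M(U) ≤ λ, the number of equivalence classes of the relation ∼_U on the subsets of U is at most 2^{q^{λ−1} + q^{λ−2} + ⋯ + q + 1} + 1. (Hence the class of F-representable matroids is strongly pigeonhole.) -/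
open Set

section AuxAll
open Submodule Module

lemma aux_geom (q : ℕ) (hq : 1 ≤ q) (m : ℕ) :
    (q - 1) * (∑ i ∈ Finset.range m, q ^ i) + 1 = q ^ m := by
  obtain ⟨r, rfl⟩ : ∃ r, q = r + 1 := ⟨q - 1, by omega⟩
  induction m with
  | zero => simp
  | succ m ih =>
    rw [Finset.sum_range_succ, Nat.mul_add, pow_succ, ← ih]
    simp only [Nat.add_sub_cancel]
    ring

section AuxLemmas
open Set Submodule Module

variable {α : Type*} {F : Type} [Field F] {W : Type} [AddCommGroup W] [Module F W]
  {M : Matroid α} {v : α → W}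

lemma aux_indep_union_iff
    (hv : ∀ X ⊆ M.E, (M.Indep X ↔ Set.InjOn v X ∧ LinearIndependent F (fun x : X => v x.1)))
    {A B : Set α} (hA : A ⊆ M.E) (hB : B ⊆ M.E) (hAB : Disjoint A B) :
    M.Indep (A ∪ B) ↔ M.Indep A ∧ M.Indep B ∧
      Disjoint (span F (v '' A)) (span F (v '' B)) := by
  constructor
  · intro h
    refine ⟨h.subset subset_union_left, h.subset subset_union_right, ?_⟩
    obtain ⟨hinj, hli⟩ := (hv _ (union_subset hA hB)).1 h
    have h1 : (fun x : ↥(A ∪ B) => v x.1) '' {x : ↥(A ∪ B) | x.1 ∈ A} = v '' A := by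
      ext w
      constructor
      · rintro ⟨⟨a, ha⟩, haA, rfl⟩; exact ⟨a, haA, rfl⟩
      · rintro ⟨a, haA, rfl⟩; exact ⟨⟨a, Or.inl haA⟩, haA, rfl⟩
    have h2 : (fun x : ↥(A ∪ B) => v x.1) '' {x : ↥(A ∪ B) | x.1 ∈ B} = v '' B := by
      ext w
      constructor
      · rintro ⟨⟨a, ha⟩, haB, rfl⟩; exact ⟨a, haB, rfl⟩
      · rintro ⟨a, haB, rfl⟩; exact ⟨⟨a, Or.inr haB⟩, haB, rfl⟩
    have hd : Disjoint {x : ↥(A ∪ B) | x.1 ∈ A} {x : ↥(A ∪ B) | x.1 ∈ B} := by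
      rw [Set.disjoint_left]
      intro x hx1 hx2
      exact Set.disjoint_left.1 hAB hx1 hx2
    have := hli.disjoint_span_image hd
    rwa [h1, h2] at this
  · rintro ⟨hA', hB', hd⟩
    obtain ⟨hinjA, hliA⟩ := (hv _ hA).1 hA'
    obtain ⟨hinjB, hliB⟩ := (hv _ hB).1 hB'
    have hsA : LinearIndependent F ((↑) : ↥(v '' A) → W) := (linearIndepOn_iff_image hinjA).1 hliA
    have hsB : LinearIndependent F ((↑) : ↥(v '' B) → W) := (linearIndepOn_iff_image hinjB).1 hliB
    have hinj : Set.InjOn v (A ∪ B) := by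
      rintro x (hx | hx) y (hy | hy) hxy
      · exact hinjA hx hy hxy
      · exfalso
        have h1 : v x ∈ span F (v '' A) := subset_span ⟨x, hx, rfl⟩
        have h2 : v x ∈ span F (v '' B) := by rw [hxy]; exact subset_span ⟨y, hy, rfl⟩
        have h0 : v x = 0 := by simpa using hd.le_bot ⟨h1, h2⟩
        exact hsA.ne_zero ⟨v x, ⟨x, hx, rfl⟩⟩ h0
      · exfalso
        have h1 : v y ∈ span F (v '' A) := subset_span ⟨y, hy, rfl⟩
        have h2 : v y ∈ span F (v '' B) := by rw [← hxy]; exact subset_span ⟨x, hx, rfl⟩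
        have h0 : v y = 0 := by simpa using hd.le_bot ⟨h1, h2⟩
        exact hsA.ne_zero ⟨v y, ⟨y, hy, rfl⟩⟩ h0
      · exact hinjB hx hy hxy
    refine (hv _ (union_subset hA hB)).2 ⟨hinj, ?_⟩
    refine (linearIndepOn_iff_image hinj).2 ?_
    rw [image_union]
    exact LinearIndepOn.union (v := id) hsA hsB (by simpa only [image_id] using hd)

lemma aux_finrank_le_mrank
    (hv : ∀ X ⊆ M.E, (M.Indep X ↔ Set.InjOn v X ∧ LinearIndependent F (fun x : X => v x.1)))
    {X : Set α} (hX : X ⊆ M.E) (hXfin : X.Finite) :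
    finrank F (span F (v '' X)) ≤ mrank M X := by
  obtain ⟨b, hbX, hbspan, hbli⟩ := exists_linearIndependent F (v '' X)
  have hbfin : b.Finite := (hXfin.image v).subset hbX
  haveI : Fintype ↥b := hbfin.fintype
  have hex : ∀ w : b, ∃ x, x ∈ X ∧ v x = w := fun w => hbX w.2
  choose g hg1 hg2 using hex
  have hIX : Set.range g ⊆ X := range_subset_iff.2 hg1
  have hvI : v '' Set.range g = b := by
    rw [← Set.range_comp]
    have he : v ∘ g = fun w : b => (w : W) := funext hg2
    rw [he, Subtype.range_coe]
  have hinjI : Set.InjOn v (Set.range g) := by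
    rintro x ⟨w, rfl⟩ y ⟨w', rfl⟩ hxy
    rw [hg2 w, hg2 w'] at hxy
    rw [Subtype.ext hxy]
  have hliI : LinearIndependent F (fun x : ↥(Set.range g) => v x.1) := by
    refine (linearIndepOn_iff_image hinjI).2 ?_
    rw [hvI]
    exact hbli
  have hIndep : M.Indep (Set.range g) := (hv _ (hIX.trans hX)).2 ⟨hinjI, hliI⟩
  have hginj : Function.Injective g := by
    intro w w' hww
    have := hg2 w
    rw [hww, hg2 w'] at this
    exact Subtype.ext this.symm
  have e1 : (Set.range g).ncard = b.ncard := by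
    rw [← Set.image_univ, ncard_image_of_injective _ hginj, ncard_univ,
      Nat.card_coe_set_eq]
  have e3 : finrank F (span F (v '' X)) = b.toFinset.card := by
    rw [← hbspan, finrank_span_set_eq_card hbli]
  have hcard : (Set.range g).ncard = finrank F (span F (v '' X)) := by
    rw [e1, e3, ncard_eq_toFinset_card']
  have hbdd : BddAbove {n | ∃ I, I ⊆ X ∧ M.Indep I ∧ I.ncard = n} := by
    refine ⟨X.ncard, ?_⟩
    rintro n ⟨J, hJ, -, rfl⟩
    exact ncard_le_ncard hJ hXfin
  have := le_csSup hbdd (⟨Set.range g, hIX, hIndep, rfl⟩ :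
    (Set.range g).ncard ∈ {n | ∃ I, I ⊆ X ∧ M.Indep I ∧ I.ncard = n})
  rw [hcard] at this
  exact this

lemma aux_mrank_le_finrank
    (hv : ∀ X ⊆ M.E, (M.Indep X ↔ Set.InjOn v X ∧ LinearIndependent F (fun x : X => v x.1)))
    (hEfin : M.E.Finite) :
    mrank M M.E ≤ finrank F (span F (v '' M.E)) := by
  haveI : FiniteDimensional F (span F (v '' M.E)) :=
    FiniteDimensional.span_of_finite F (hEfin.image v)
  refine csSup_le ⟨0, ∅, empty_subset _, M.empty_indep, by simp⟩ ?_
  rintro n ⟨I, hIE, hI, rfl⟩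
  obtain ⟨hinj, hli⟩ := (hv I hIE).1 hI
  have hIfin : I.Finite := hEfin.subset hIE
  haveI : Fintype ↥(v '' I) := (hIfin.image v).fintype
  have h1 : LinearIndependent F ((↑) : ↥(v '' I) → W) := (linearIndepOn_iff_image hinj).1 hli
  calc I.ncard = (v '' I).ncard := (ncard_image_of_injOn hinj).symm
    _ = (v '' I).toFinset.card := ncard_eq_toFinset_card' _
    _ = finrank F (span F (v '' I)) := (finrank_span_set_eq_card h1).symm
    _ ≤ finrank F (span F (v '' M.E)) := Submodule.finrank_mono (span_mono (image_mono (f := v) hIE))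

lemma aux_eq_of_points {G A B : Submodule F W} (hA : A ≤ G) (hB : B ≤ G)
    (h : ∀ p : Submodule F W, p ≤ G → finrank F p = 1 → (p ≤ A ↔ p ≤ B)) : A = B := by
  have key : ∀ (A' B' : Submodule F W), A' ≤ G →
      (∀ p : Submodule F W, p ≤ G → finrank F p = 1 → (p ≤ A' → p ≤ B')) → A' ≤ B' := by
    intro A' B' hA' h' x hx
    rcases eq_or_ne x 0 with rfl | hx0
    · exact B'.zero_mem
    · have h1 : span F {x} ≤ A' := (span_singleton_le_iff_mem x A').2 hx
      exact h' (span F {x}) (h1.trans hA') (finrank_span_singleton hx0) h1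
        (mem_span_singleton_self x)
  exact le_antisymm (key A B hA fun p h1 h2 => (h p h1 h2).1)
    (key B A hB fun p h1 h2 => (h p h1 h2).2)

end AuxLemmas

/-- finite-field representable matroids are strongly pigeonhole with the
explicit bound 2^(q^(λ-1)+⋯+q+1) + 1 on the number of classes of ∼_U. -/
theorem representable_sim_classes {α : Type*} (F : Type) [Field F] [Fintype F]
    (l : ℕ) (hl : 0 < l) (M : Matroid α) (hfin : M.E.Finite)
    (hrep : ∃ (W : Type) (_ : AddCommGroup W) (_ : Module F W) (v : α → W),
      ∀ X ⊆ M.E, (M.Indep X ↔ Set.InjOn v X ∧ LinearIndependent F (fun x : X => v x.1)))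
    (U : Set α) (hU : U ⊆ M.E) (hconn : connVal M U ≤ l) :
    SimClassesLE M U (2 ^ (∑ i ∈ Finset.range l, Fintype.card F ^ i) + 1) := by
  classical
  obtain ⟨W, _, _, v, hv⟩ := hrep
  set q := Fintype.card F with hq
  have hq2 : 2 ≤ q := Fintype.one_lt_card
  set N := ∑ i ∈ Finset.range l, q ^ i with hN
  set S := span F (v '' (M.E \ U)) with hS
  set SU := span F (v '' U) with hSU
  set G := SU ⊓ S with hG
  haveI : FiniteDimensional F SU := FiniteDimensional.span_of_finite F ((hfin.subset hU).image v)
  haveI : FiniteDimensional F S :=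
    FiniteDimensional.span_of_finite F ((hfin.subset diff_subset).image v)
  haveI hGfd : FiniteDimensional F G := Submodule.finiteDimensional_of_le inf_le_left
  -- dimension bound
  have hsup : SU ⊔ S = span F (v '' M.E) := by
    rw [hSU, hS, ← span_union, ← image_union, union_diff_cancel hU]
  have hdim : finrank F G ≤ l := by
    have h1 : finrank F ↥(SU ⊔ S) + finrank F G = finrank F SU + finrank F S :=
      Submodule.finrank_sup_add_finrank_inf_eq SU S
    have h2 : finrank F SU ≤ mrank M U := aux_finrank_le_mrank hv hU (hfin.subset hU)
    have h3 : finrank F S ≤ mrank M (M.E \ U) :=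
      aux_finrank_le_mrank hv diff_subset (hfin.subset diff_subset)
    have h4 : mrank M M.E ≤ finrank F ↥(SU ⊔ S) := by
      rw [hsup]; exact aux_mrank_le_finrank hv hfin
    have h5 : mrank M U + mrank M (M.E \ U) - mrank M M.E ≤ l := hconn
    omega
  -- the finite type of points
  haveI : Finite ↥G := Module.finite_of_finite F
  haveI : Fintype ↥G := Fintype.ofFinite _
  have hP : Finite {p : Submodule F W // p ≤ G ∧ finrank F p = 1} := by
    have hj : Function.Injective
        (fun p : {p : Submodule F W // p ≤ G ∧ finrank F p = 1} =>
          ({x : ↥G | x.1 ∈ p.1} : Set ↥G)) := by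
      intro p p' hpp
      have hpp' : {x : ↥G | x.1 ∈ p.1} = {x : ↥G | x.1 ∈ p'.1} := hpp
      apply Subtype.ext
      ext x
      constructor
      · intro hx
        exact (Set.ext_iff.1 hpp' ⟨x, p.2.1 hx⟩).1 hx
      · intro hx
        exact (Set.ext_iff.1 hpp' ⟨x, p'.2.1 hx⟩).2 hx
    exact Finite.of_injective _ hj
  haveI := hP
  haveI : Fintype {p : Submodule F W // p ≤ G ∧ finrank F p = 1} := Fintype.ofFinite _
  set P := {p : Submodule F W // p ≤ G ∧ finrank F p = 1} with hPdef
  -- counting points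
  have hPcard : Fintype.card P ≤ N := by
    have hexP : ∀ p : P, ∃ t : Finset ↥G, t.card = q - 1 ∧
        ∀ x : ↥G, x ∈ t ↔ (x.1 ∈ p.1 ∧ x.1 ≠ 0) := by
      intro p
      haveI : Finite ↥(p.1) :=
        Finite.of_injective (Submodule.inclusion p.2.1) (Submodule.inclusion_injective _)
      haveI : Fintype ↥(p.1) := Fintype.ofFinite _
      refine ⟨Set.toFinset {x : ↥G | x.1 ∈ p.1 ∧ x.1 ≠ 0}, ?_, by simp⟩
      have e : {x : ↥G | x.1 ∈ p.1 ∧ x.1 ≠ 0} ≃ {y : ↥(p.1) // ¬ (y = 0)} :=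
        { toFun := fun x => ⟨⟨x.1.1, x.2.1⟩, fun h => x.2.2 (congrArg Subtype.val h)⟩
          invFun := fun y => ⟨⟨y.1.1, p.2.1 y.1.2⟩, ⟨y.1.2, fun h => y.2 (Subtype.ext h)⟩⟩
          left_inv := fun x => by ext; rfl
          right_inv := fun y => by ext; rfl }
      rw [Set.toFinset_card, Fintype.card_congr e, Fintype.card_subtype_compl,
        Fintype.card_subtype_eq]
      have : Fintype.card ↥(p.1) = q ^ finrank F ↥(p.1) := card_eq_pow_finrank
      rw [this, p.2.2, pow_one]
    choose t ht1 ht2 using hexP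
    have hdisj : ∀ p ∈ (Finset.univ : Finset P), ∀ p' ∈ Finset.univ, p ≠ p' →
        Disjoint (t p) (t p') := by
      intro p _ p' _ hne
      rw [Finset.disjoint_left]
      intro x hx hx'
      apply hne
      obtain ⟨h1, h10⟩ := (ht2 p x).1 hx
      obtain ⟨h2, -⟩ := (ht2 p' x).1 hx'
      haveI : FiniteDimensional F ↥(p.1) := Submodule.finiteDimensional_of_le p.2.1
      haveI : FiniteDimensional F ↥(p'.1) := Submodule.finiteDimensional_of_le p'.2.1
      have e1 : span F {x.1} = p.1 :=
        Submodule.eq_of_le_of_finrank_le ((span_singleton_le_iff_mem _ _).2 h1)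
          (by rw [finrank_span_singleton h10, p.2.2])
      have e2 : span F {x.1} = p'.1 :=
        Submodule.eq_of_le_of_finrank_le ((span_singleton_le_iff_mem _ _).2 h2)
          (by rw [finrank_span_singleton h10, p'.2.2])
      exact Subtype.ext (e1.symm.trans e2)
    have hsub : Finset.univ.biUnion t ⊆ (Finset.univ : Finset ↥G).erase 0 := by
      intro x hx
      rw [Finset.mem_biUnion] at hx
      obtain ⟨p, -, hx⟩ := hx
      refine Finset.mem_erase.2 ⟨fun h0 => ((ht2 p x).1 hx).2 ?_, Finset.mem_univ _⟩
      rw [h0]; rfl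
    have hcount : Fintype.card P * (q - 1) ≤ Fintype.card ↥G - 1 := by
      have hb := Finset.card_biUnion hdisj
      have hle := Finset.card_le_card hsub
      rw [Finset.card_erase_of_mem (Finset.mem_univ _), Finset.card_univ] at hle
      rw [hb] at hle
      have : ∑ p : P, (t p).card = Fintype.card P * (q - 1) := by
        rw [Finset.sum_congr rfl (fun p _ => ht1 p), Finset.sum_const, Finset.card_univ,
          smul_eq_mul]
      omega
    have hcardG : Fintype.card ↥G = q ^ finrank F G := card_eq_pow_finrank
    have hgeom : (q - 1) * N + 1 = q ^ l := aux_geom q (by omega) l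
    have hql : q ^ finrank F G ≤ q ^ l := Nat.pow_le_pow_right (by omega) hdim
    have hq1 : 1 ≤ q ^ finrank F G := Nat.one_le_pow _ _ (by omega)
    have hfin2 : (q - 1) * Fintype.card P ≤ (q - 1) * N := by
      rw [Nat.mul_comm (q - 1) (Fintype.card P)]
      omega
    exact Nat.le_of_mul_le_mul_left hfin2 (by omega)
  -- encoding
  have hcard2 : Fintype.card (Option (Finset P)) ≤ 2 ^ N + 1 := by
    rw [Fintype.card_option, Fintype.card_finset]
    have := Nat.pow_le_pow_right (show 1 ≤ 2 by norm_num) hPcard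
    omega
  obtain ⟨e⟩ : Nonempty (Option (Finset P) ≃ Fin (Fintype.card (Option (Finset P)))) :=
    ⟨Fintype.equivFin _⟩
  set g : Set α → Option (Finset P) := fun X =>
    if M.Indep X ∧ X ⊆ U then
      some (Finset.univ.filter
        (fun p : P => p.1 ≤ span F (v '' X) ⊓ S)) else none with hgdef
  refine ⟨fun X => Fin.castLE hcard2 (e (g X)), ?_⟩
  intro X X' hXU hX'U hff
  have hgg : g X = g X' := by
    apply e.injective
    exact Fin.castLE_injective hcard2 hff
  by_cases hIX : M.Indep X <;> by_cases hIX' : M.Indep X'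
  · -- both independent
    have hgX : g X = some (Finset.univ.filter
        (fun p : P => p.1 ≤ span F (v '' X) ⊓ S)) := by
      simp only [hgdef]
      rw [if_pos ⟨hIX, hXU⟩]
    have hgX' : g X' = some (Finset.univ.filter
        (fun p : P => p.1 ≤ span F (v '' X') ⊓ S)) := by
      simp only [hgdef]
      rw [if_pos ⟨hIX', hX'U⟩]
    rw [hgX, hgX'] at hgg
    have hfeq := Option.some_injective _ hgg
    have hWle : span F (v '' X) ⊓ S ≤ G := inf_le_inf_right S (span_mono (image_mono (f := v) hXU))
    have hWle' : span F (v '' X') ⊓ S ≤ G := inf_le_inf_right S (span_mono (image_mono (f := v) hX'U))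
    have hWeq : span F (v '' X) ⊓ S = span F (v '' X') ⊓ S := by
      refine aux_eq_of_points hWle hWle' ?_
      intro p hpG hp1
      have := Finset.ext_iff.1 hfeq ⟨p, hpG, hp1⟩
      simpa using this
    intro Z hZ
    have hZE : Z ⊆ M.E := hZ.trans diff_subset
    have hdXZ : Disjoint X Z := Set.disjoint_left.2 fun {a} ha haZ => (hZ haZ).2 (hXU ha)
    have hdX'Z : Disjoint X' Z := Set.disjoint_left.2 fun {a} ha haZ => (hZ haZ).2 (hX'U ha)
    rw [aux_indep_union_iff hv (hXU.trans hU) hZE hdXZ,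
      aux_indep_union_iff hv (hX'U.trans hU) hZE hdX'Z]
    have hSZ : span F (v '' Z) ≤ S := span_mono (image_mono (f := v) hZ)
    have key : ∀ A : Submodule F W,
        Disjoint A (span F (v '' Z)) ↔ Disjoint (A ⊓ S) (span F (v '' Z)) := by
      intro A
      rw [disjoint_iff, disjoint_iff, inf_assoc, inf_eq_right.2 hSZ]
    simp only [hIX, hIX', true_and]
    constructor
    · rintro ⟨hZi, hd⟩
      refine ⟨hZi, ?_⟩
      rw [key, ← hWeq, ← key]
      exact hd
    · rintro ⟨hZi, hd⟩
      refine ⟨hZi, ?_⟩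
      rw [key, hWeq, ← key]
      exact hd
  · -- X indep, X' not
    exfalso
    have hgX : g X = some (Finset.univ.filter
        (fun p : P => p.1 ≤ span F (v '' X) ⊓ S)) := by
      simp only [hgdef]
      rw [if_pos ⟨hIX, hXU⟩]
    have hgX' : g X' = none := by
      simp only [hgdef]
      rw [if_neg (fun h => hIX' h.1)]
    rw [hgX, hgX'] at hgg
    exact Option.some_ne_none _ hgg
  · -- X not indep, X' indep
    exfalso
    have hgX : g X = none := by
      simp only [hgdef]
      rw [if_neg (fun h => hIX h.1)]
    have hgX' : g X' = some (Finset.univ.filter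
        (fun p : P => p.1 ≤ span F (v '' X') ⊓ S)) := by
      simp only [hgdef]
      rw [if_pos ⟨hIX', hX'U⟩]
    rw [hgX, hgX'] at hgg
    exact Option.some_ne_none _ hgg.symm
  · -- both dependent
    intro Z hZ
    exact iff_of_false (fun h => hIX (h.subset subset_union_left))
      (fun h => hIX' (h.subset subset_union_left))
end AuxAll
end

section
/- Let F be a finite field and let M be a matroid on ground set E with an F-representation v : E → W into an F-vector space W. Let U ⊆ E and set V = E ∖ U. If X and X' are independent subsets of U such that span(v(X)) ∩ span(v(V)) = span(v(X')) ∩ span(v(V)) as subspaces of W, then X ∼_U X'; that is, for every Z ⊆ V, the set X ∪ Z is independent in M if and only if X' ∪ Z is independent in M. -/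
open Set

lemma linIndep_union_iff {α F W : Type*} [Field F] [AddCommGroup W] [Module F W]
    {v : α → W} {s t : Set α} (hd : Disjoint s t) :
    LinearIndependent F (fun x : ↥(s ∪ t) => v x) ↔
      LinearIndependent F (fun x : s => v x.1) ∧ LinearIndependent F (fun x : t => v x.1) ∧
      Disjoint (Submodule.span F (v '' s)) (Submodule.span F (v '' t)) := by
  classical
  have he : (fun x : ↥(s ∪ t) => v x) ∘ (Equiv.Set.union hd).symm
      = Sum.elim (fun x : s => v x.1) (fun x : t => v x.1) := by
    ext x; cases x <;> rfl
  rw [← linearIndependent_equiv ((Equiv.Set.union hd).symm), he, linearIndependent_sum]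
  simp only [Sum.elim_comp_inl, Sum.elim_comp_inr, ← Set.image_eq_range]

/-- for an F-representation, equality of the intersections of spans with the
span of the complementary side implies equivalence under ∼_U. -/
theorem representable_span_inter_sim {α F W : Type*} [Field F] [Fintype F]
    [AddCommGroup W] [Module F W] (M : Matroid α) (v : α → W)
    (hrep : ∀ X ⊆ M.E, (M.Indep X ↔ Set.InjOn v X ∧ LinearIndependent F (fun x : X => v x.1)))
    (U : Set α) (hU : U ⊆ M.E)
    (X X' : Set α) (hXU : X ⊆ U) (hX'U : X' ⊆ U)
    (hX : M.Indep X) (hX' : M.Indep X')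
    (hspan : Submodule.span F (v '' X) ⊓ Submodule.span F (v '' (M.E \ U))
           = Submodule.span F (v '' X') ⊓ Submodule.span F (v '' (M.E \ U))) :
    ∀ Z ⊆ M.E \ U, (M.Indep (X ∪ Z) ↔ M.Indep (X' ∪ Z)) := by
  have key : ∀ Y Y' : Set α, Y ⊆ U → Y' ⊆ U → M.Indep Y' →
      (Submodule.span F (v '' Y) ⊓ Submodule.span F (v '' (M.E \ U))
        = Submodule.span F (v '' Y') ⊓ Submodule.span F (v '' (M.E \ U))) →
      ∀ Z ⊆ M.E \ U, M.Indep (Y ∪ Z) → M.Indep (Y' ∪ Z) := by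
    intro Y Y' hYU hY'U hY' hsp Z hZ hind
    have hZE : Z ⊆ M.E := fun z hz => (hZ hz).1
    have hYZE : Y ∪ Z ⊆ M.E := union_subset (hYU.trans hU) hZE
    have hY'ZE : Y' ∪ Z ⊆ M.E := union_subset (hY'U.trans hU) hZE
    have hdYZ : Disjoint Y Z := disjoint_left.mpr fun a ha hb => (hZ hb).2 (hYU ha)
    have hdY'Z : Disjoint Y' Z := disjoint_left.mpr fun a ha hb => (hZ hb).2 (hY'U ha)
    obtain ⟨hinj, hli⟩ := (hrep _ hYZE).mp hind
    obtain ⟨hinj', hli'⟩ := (hrep _ (hY'.subset_ground)).mp hY'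
    rw [linIndep_union_iff hdYZ] at hli
    obtain ⟨hliY, hliZ, hdsp⟩ := hli
    -- disjointness of spans for Y' and Z
    have hdsp' : Disjoint (Submodule.span F (v '' Y')) (Submodule.span F (v '' Z)) := by
      rw [Submodule.disjoint_def] at hdsp ⊢
      intro w hw1 hw2
      have hwV : w ∈ Submodule.span F (v '' (M.E \ U)) :=
        Submodule.span_mono (image_mono (f := v) hZ) hw2
      have hwY : w ∈ Submodule.span F (v '' Y) := by
        have h3 : w ∈ Submodule.span F (v '' Y) ⊓ Submodule.span F (v '' (M.E \ U)) := by
          rw [hsp]; exact Submodule.mem_inf.mpr ⟨hw1, hwV⟩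
        exact h3.1
      exact hdsp w hwY hw2
    refine (hrep _ hY'ZE).mpr ⟨?_, (linIndep_union_iff hdY'Z).mpr ⟨hli', hliZ, hdsp'⟩⟩
    -- injectivity on the union
    rw [injOn_union hdY'Z]
    refine ⟨hinj', hinj.mono subset_union_right, ?_⟩
    intro a ha b hb hab
    have h1 : v b ∈ Submodule.span F (v '' Y') :=
      hab ▸ Submodule.subset_span (mem_image_of_mem v ha)
    have h2 : v b ∈ Submodule.span F (v '' Z) :=
      Submodule.subset_span (mem_image_of_mem v hb)
    have := Submodule.disjoint_def.mp hdsp' _ h1 h2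
    exact hliZ.ne_zero ⟨b, hb⟩ this |>.elim
  intro Z hZ
  exact ⟨fun h => key X X' hXU hX'U hX' hspan Z hZ h,
    fun h => key X' X hX'U hXU hX hspan.symm Z hZ h⟩
end

section
/- Let 𝓜 be a class of matroids. Then 𝓜 is pigeonhole if and only if the class {M* : M ∈ 𝓜} of dual matroids is pigeonhole. -/
open Set

section Aux

variable {α : Type*} {M : Matroid α} {X Y U B I J : Set α} {n : ℕ}

lemma mrank_bddAbove (hE : M.E.Finite) (X : Set α) :
    BddAbove {n | ∃ I, I ⊆ X ∧ M.Indep I ∧ I.ncard = n} := by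
  refine ⟨M.E.ncard, ?_⟩
  rintro n ⟨I, -, hI, rfl⟩
  exact Set.ncard_le_ncard hI.subset_ground hE

lemma le_mrank (hE : M.E.Finite) (hIX : I ⊆ X) (hI : M.Indep I) : I.ncard ≤ mrank M X :=
  le_csSup (mrank_bddAbove hE X) ⟨I, hIX, hI, rfl⟩

lemma mrank_le_of_forall (hn : ∀ I, I ⊆ X → M.Indep I → I.ncard ≤ n) : mrank M X ≤ n := by
  refine csSup_le ⟨0, ∅, empty_subset X, M.empty_indep, by simp⟩ ?_
  rintro m ⟨I, h1, h2, rfl⟩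
  exact hn I h1 h2

lemma mrank_eq_of_basis' (hE : M.E.Finite) (hB : M.IsBasis' B X) : mrank M X = B.ncard := by
  refine le_antisymm (mrank_le_of_forall fun I hIX hI => ?_) (le_mrank hE hB.subset hB.indep)
  obtain ⟨J, hJ, hIJ⟩ := hI.subset_isBasis'_of_subset hIX
  have hcard : J.encard = B.encard := hJ.encard_eq_encard hB
  have hJfin : J.Finite := hE.subset hJ.indep.subset_ground
  calc I.ncard ≤ J.ncard := ncard_le_ncard hIJ hJfin
  _ = B.ncard := by rw [ncard_def, hcard, ← ncard_def]

lemma mrank_mono (hE : M.E.Finite) (h : X ⊆ Y) : mrank M X ≤ mrank M Y :=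
  mrank_le_of_forall fun I hIX hI => le_mrank hE (hIX.trans h) hI

lemma mrank_empty (M : Matroid α) : mrank M ∅ = 0 :=
  Nat.le_zero.mp (mrank_le_of_forall fun I hIX _ => by
    simp [subset_empty_iff.mp hIX])

lemma mrank_ground (hE : M.E.Finite) (hB : M.IsBase B) : mrank M M.E = B.ncard :=
  mrank_eq_of_basis' hE hB.isBasis_ground.isBasis'

lemma mrank_dual_add (hE : M.E.Finite) (hX : X ⊆ M.E) :
    mrank M✶ X + mrank M M.E = X.ncard + mrank M (M.E \ X) := by
  have hE' : M✶.E.Finite := hE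
  obtain ⟨J, hJ⟩ := M.exists_isBasis (M.E \ X) diff_subset
  obtain ⟨B, hB, hJB⟩ := hJ.indep.exists_isBase_superset
  have hXfin : X.Finite := hE.subset hX
  have hBJ : B ∩ (M.E \ X) = J :=
    (hJ.eq_of_subset_indep (hB.indep.subset inter_subset_left)
      (subset_inter hJB hJ.subset) inter_subset_right).symm
  have hBdiffX : B \ X = J := by
    rw [← hBJ]
    ext x
    constructor
    · rintro ⟨hxB, hxX⟩; exact ⟨hxB, hB.subset_ground hxB, hxX⟩
    · rintro ⟨hxB, -, hxX⟩; exact ⟨hxB, hxX⟩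
  have hJcard : mrank M (M.E \ X) = J.ncard := mrank_eq_of_basis' hE hJ.isBasis'
  have hgr : mrank M M.E = B.ncard := mrank_ground hE hB
  have e3 : B.ncard = (B ∩ X).ncard + J.ncard := by
    rw [← hBdiffX]
    exact (ncard_inter_add_ncard_diff_eq_ncard B X (hE.subset hB.subset_ground)).symm
  have e5 : (X ∩ B).ncard + (X \ B).ncard = X.ncard :=
    ncard_inter_add_ncard_diff_eq_ncard X B hXfin
  have e8 : (X ∩ B).ncard = (B ∩ X).ncard := by rw [inter_comm]
  have hdXB : mrank M✶ X = (X \ B).ncard := by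
    apply le_antisymm
    · apply mrank_le_of_forall
      intro I hIX hI
      rw [Matroid.dual_indep_iff_exists'] at hI
      obtain ⟨hIE, B', hB', hdisj⟩ := hI
      have hIB' : I ⊆ X \ B' := subset_diff.mpr ⟨hIX, hdisj⟩
      have hB'fin : B'.Finite := hE.subset hB'.subset_ground
      have h1 : (B' \ X).ncard ≤ J.ncard := by
        rw [← hJcard]
        exact le_mrank hE (diff_subset_diff_left hB'.subset_ground)
          (hB'.indep.subset diff_subset)
      have e1 : B'.ncard = B.ncard := by
        rw [ncard_def, hB'.encard_eq_encard_of_isBase hB, ← ncard_def]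
      have e2 : (B' ∩ X).ncard + (B' \ X).ncard = B'.ncard :=
        ncard_inter_add_ncard_diff_eq_ncard B' X hB'fin
      have e4 : (X ∩ B').ncard + (X \ B').ncard = X.ncard :=
        ncard_inter_add_ncard_diff_eq_ncard X B' hXfin
      have e6 : I.ncard ≤ (X \ B').ncard := ncard_le_ncard hIB' (hXfin.diff (t := B'))
      have e7 : (X ∩ B').ncard = (B' ∩ X).ncard := by rw [inter_comm]
      omega
    · apply le_mrank hE' diff_subset
      rw [Matroid.dual_indep_iff_exists']
      exact ⟨diff_subset.trans hX, B, hB, disjoint_sdiff_left⟩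
  rw [hdXB, hgr, hJcard]
  omega

lemma connVal_dual (hE : M.E.Finite) (hU : U ⊆ M.E) : connVal M✶ U = connVal M U := by
  have h1 := mrank_dual_add hE hU
  have h2 := mrank_dual_add hE (diff_subset : M.E \ U ⊆ M.E)
  have h3 := mrank_dual_add hE (Subset.rfl : M.E ⊆ M.E)
  rw [diff_diff_cancel_left hU] at h2
  rw [diff_self, mrank_empty] at h3
  have hUU : M.E ∩ U = U := inter_eq_self_of_subset_right hU
  have hsum : U.ncard + (M.E \ U).ncard = M.E.ncard := by
    have := ncard_inter_add_ncard_diff_eq_ncard M.E U hE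
    rwa [hUU] at this
  have hub : mrank M M.E ≤ mrank M U + mrank M (M.E \ U) := by
    apply mrank_le_of_forall
    intro I hIE hI
    have hIfin : I.Finite := hE.subset hI.subset_ground
    have hsp : (I ∩ U).ncard + (I \ U).ncard = I.ncard :=
      ncard_inter_add_ncard_diff_eq_ncard I U hIfin
    have ha : (I ∩ U).ncard ≤ mrank M U :=
      le_mrank hE inter_subset_right (hI.subset inter_subset_left)
    have hb : (I \ U).ncard ≤ mrank M (M.E \ U) :=
      le_mrank hE (diff_subset_diff_left hIE) (hI.subset diff_subset)
    omega
  have ha : mrank M U ≤ mrank M M.E := mrank_mono hE hU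
  have hb : mrank M (M.E \ U) ≤ mrank M M.E := mrank_mono hE diff_subset
  have hge : mrank M M.E ≤ M.E.ncard :=
    mrank_le_of_forall fun I hIE _ => ncard_le_ncard hIE hE
  unfold connVal
  simp only [Matroid.dual_ground]
  omega

def Decomp.dual (D : Decomp M) : Decomp M✶ where
  V := D.V
  fin := D.fin
  T := D.T
  conn := D.conn
  acyc := D.acyc
  deg := D.deg
  leafEquiv := D.leafEquiv

lemma Decomp.ground_finite (D : Decomp M) : M.E.Finite := by
  have := D.fin
  have : Finite {v : D.V // (D.T.neighborSet v).ncard = 1} := Subtype.finite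
  exact Set.finite_coe_iff.mp (Finite.of_equiv _ D.leafEquiv.symm)

lemma displays_subset_ground {D : Decomp M} (h : D.Displays U) : U ⊆ M.E := by
  obtain ⟨u, v, -, rfl⟩ := h
  rintro x ⟨hx, -⟩
  exact hx

lemma bwLE_dual {l : ℕ} (h : bwLE M l) : bwLE M✶ l := by
  obtain ⟨D, hD⟩ := h
  refine ⟨D.dual, fun U hU => ?_⟩
  have hU' : D.Displays U := hU
  rw [connVal_dual D.ground_finite (displays_subset_ground hU')]
  exact hD U hU'

lemma coindep_transfer (hE : M.E.Finite) (hU : U ⊆ M.E)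
    {k : ℕ} (f : Set α → Fin k)
    (hf : ∀ X X' : Set α, X ⊆ U → X' ⊆ U → f X = f X' → Sim M U X X')
    {X X' Z : Set α} (hX : X ⊆ U) (hX' : X' ⊆ U) (hZ : Z ⊆ M.E \ U)
    (hA : {c | ∃ I J, I ⊆ U \ X ∧ J ⊆ M.E \ U ∧ M.IsBase (I ∪ J) ∧ f I = c}
        ⊆ {c | ∃ I J, I ⊆ U \ X' ∧ J ⊆ M.E \ U ∧ M.IsBase (I ∪ J) ∧ f I = c})
    (h : M✶.Indep (X ∪ Z)) : M✶.Indep (X' ∪ Z) := by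
  rw [Matroid.dual_indep_iff_exists'] at h ⊢
  obtain ⟨hXZE, B, hB, hdisj⟩ := h
  set I := B ∩ U with hIdef
  set J := B \ U with hJdef
  have hIJB : I ∪ J = B := inter_union_diff B U
  have hIU : I ⊆ U := inter_subset_right
  have hJsub : J ⊆ M.E \ U := diff_subset_diff_left hB.subset_ground
  have hIX : I ⊆ U \ X := by
    rw [subset_diff]
    exact ⟨hIU, (hdisj.mono subset_union_left inter_subset_left).symm⟩
  have hmem : f I ∈ {c | ∃ I J, I ⊆ U \ X ∧ J ⊆ M.E \ U ∧ M.IsBase (I ∪ J) ∧ f I = c} :=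
    ⟨I, J, hIX, hJsub, by rwa [hIJB], rfl⟩
  obtain ⟨I', J₀, hI'X', hJ₀, hB₀, hfI⟩ := hA hmem
  have hI'U : I' ⊆ U := hI'X'.trans diff_subset
  have hsim : Sim M U I' I := hf I' I hI'U hIU hfI
  have hIJindep : M.Indep (I ∪ J) := by rw [hIJB]; exact hB.indep
  have hI'J : M.Indep (I' ∪ J) := (hsim J hJsub).mpr hIJindep
  have hIJ₀ : M.Indep (I ∪ J₀) := (hsim J₀ hJ₀).mp hB₀.indep
  have hJfin : J.encard ≠ ⊤ := (hE.subset (hJsub.trans diff_subset)).encard_lt_top.ne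
  have hJ₀fin : J₀.encard ≠ ⊤ := (hE.subset (hJ₀.trans diff_subset)).encard_lt_top.ne
  have hdIJ : Disjoint I J :=
    disjoint_left.mpr fun a haI haJ => (hJsub haJ).2 (hIU haI)
  have hdI'J : Disjoint I' J :=
    disjoint_left.mpr fun a haI haJ => (hJsub haJ).2 (hI'U haI)
  have hdIJ₀ : Disjoint I J₀ :=
    disjoint_left.mpr fun a haI haJ => (hJ₀ haJ).2 (hIU haI)
  have hdI'J₀ : Disjoint I' J₀ :=
    disjoint_left.mpr fun a haI haJ => (hJ₀ haJ).2 (hI'U haI)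
  obtain ⟨B₂, hB₂, hsub₂⟩ := hI'J.exists_isBase_superset
  have h1 : I'.encard + J.encard ≤ I.encard + J.encard := by
    calc I'.encard + J.encard = (I' ∪ J).encard := (encard_union_eq hdI'J).symm
    _ ≤ B₂.encard := encard_mono hsub₂
    _ = B.encard := hB₂.encard_eq_encard_of_isBase hB
    _ = (I ∪ J).encard := by rw [hIJB]
    _ = I.encard + J.encard := encard_union_eq hdIJ
  have h2 : I.encard + J₀.encard ≤ I'.encard + J₀.encard := by
    obtain ⟨B₃, hB₃, hsub₃⟩ := hIJ₀.exists_isBase_superset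
    calc I.encard + J₀.encard = (I ∪ J₀).encard := (encard_union_eq hdIJ₀).symm
    _ ≤ B₃.encard := encard_mono hsub₃
    _ = (I' ∪ J₀).encard := hB₃.encard_eq_encard_of_isBase hB₀
    _ = I'.encard + J₀.encard := encard_union_eq hdI'J₀
  have hle1 : I'.encard ≤ I.encard := (WithTop.add_le_add_iff_right hJfin).mp h1
  have hle2 : I.encard ≤ I'.encard := (WithTop.add_le_add_iff_right hJ₀fin).mp h2
  have hIcard : I'.encard = I.encard := le_antisymm hle1 hle2
  have hB₂fin : B₂.Finite := hE.subset hB₂.subset_ground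
  have hEq : I' ∪ J = B₂ := by
    refine (hB₂fin.subset hsub₂).eq_of_subset_of_encard_le hsub₂ ?_
    rw [encard_union_eq hdI'J, hIcard, ← encard_union_eq hdIJ, hIJB,
      hB₂.encard_eq_encard_of_isBase hB]
  have hbase' : M.IsBase (I' ∪ J) := hEq ▸ hB₂
  refine ⟨union_subset (hX'.trans hU) (hZ.trans diff_subset), I' ∪ J, hbase', ?_⟩
  rw [disjoint_union_left]
  constructor <;> rw [disjoint_union_right]
  · refine ⟨disjoint_left.mpr fun a ha ha' => (hI'X' ha').2 ha, ?_⟩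
    exact disjoint_left.mpr fun a ha ha' => (hJsub ha').2 (hX' ha)
  · refine ⟨disjoint_left.mpr fun a ha ha' => (hZ ha).2 (hI'U ha'), ?_⟩
    exact hdisj.mono subset_union_right (show J ⊆ B from diff_subset)

lemma dwLE_dual {k n : ℕ} (e : Set (Fin k) ≃ Fin n) (h : dwLE M k) : dwLE M✶ n := by
  obtain ⟨D, hD⟩ := h
  refine ⟨D.dual, fun U hU => ?_⟩
  have hU' : D.Displays U := hU
  have hE : M.E.Finite := D.ground_finite
  have hUE : U ⊆ M.E := displays_subset_ground hU'
  obtain ⟨f, hf⟩ := hD U hU'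
  refine ⟨fun X => e {c | ∃ I J, I ⊆ U \ X ∧ J ⊆ M.E \ U ∧ M.IsBase (I ∪ J) ∧ f I = c}, ?_⟩
  intro X X' hX hX' hfe
  have hA := e.injective hfe
  intro Z hZ
  have hZ' : Z ⊆ M.E \ U := hZ
  exact ⟨coindep_transfer hE hUE f hf hX hX' hZ' hA.subset,
    coindep_transfer hE hUE f hf hX' hX hZ' hA.symm.subset⟩

end Aux

/-- a class is pigeonhole iff its dual class is pigeonhole. -/
theorem pigeonhole_iff_dual_pigeonhole {α : Type*} (C : Set (Matroid α)) :
    Pigeonhole C ↔ Pigeonhole {N : Matroid α | ∃ M ∈ C, N = M✶} := by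
  constructor
  · intro h l hl
    obtain ⟨ρ, hρ⟩ := h l hl
    obtain ⟨n, ⟨e⟩⟩ := Finite.exists_equiv_fin (Set (Fin ρ))
    refine ⟨n, ?_⟩
    rintro N ⟨M, hM, rfl⟩ hbw
    have hbwM : bwLE M l := by
      have := bwLE_dual hbw
      rwa [Matroid.dual_dual] at this
    exact dwLE_dual e (hρ M hM hbwM)
  · intro h l hl
    obtain ⟨ρ, hρ⟩ := h l hl
    obtain ⟨n, ⟨e⟩⟩ := Finite.exists_equiv_fin (Set (Fin ρ))
    refine ⟨n, fun M hM hbw => ?_⟩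
    have h1 : dwLE M✶ ρ := hρ M✶ ⟨M, hM, rfl⟩ (bwLE_dual hbw)
    have h2 := dwLE_dual e h1
    rwa [Matroid.dual_dual] at h2
end

section
/- Let G be a finite bipartite simple graph with bipartition (A, B), let M[G] be its fundamental transversal matroid, let λ be a positive integer, and let (U, V) be a partition of A ∪ B with λ_{M[G]}(U) ≤ λ. Let H be the subgraph of G consisting of all edges that join a vertex of B ∩ U to a vertex of A ∩ V, or a vertex of B ∩ V to a vertex of A ∩ U. Then every matching of H contains at most λ edges. -/
open Set

/-- A matching of a graph: a set of edges, pairwise sharing no vertex. -/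
def IsGraphMatching {α : Type*} (G : SimpleGraph α) (m : Set (Sym2 α)) : Prop :=
  m ⊆ G.edgeSet ∧ m.Pairwise fun e f => ∀ x, x ∈ e → x ∉ f

/-- A matching \`m\` certifies the independence of \`X\` in the fundamental transversal matroid
of the bipartite graph \`G\` with bipartition \`(A, B)\`: \`|m| = |X ∩ A|\` and every edge of
\`m\` joins a vertex of \`X ∩ A\` to a vertex of \`B \ X\`. -/
def CertifiesIndep {α : Type*} (G : SimpleGraph α) (A B X : Set α) (m : Set (Sym2 α)) : Prop :=
  IsGraphMatching G m ∧ m.Finite ∧ m.ncard = (X ∩ A).ncard ∧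
    ∀ e ∈ m, ∃ a b, a ∈ X ∩ A ∧ b ∈ B \ X ∧ e = s(a, b)

lemma matching_inj {α : Type*} {G : SimpleGraph α} {m : Set (Sym2 α)} (hm : IsGraphMatching G m)
    {f : Sym2 α → α} (hf : ∀ e ∈ m, f e ∈ e) : Set.InjOn f m := by
  intro e he e' he' hee
  by_contra hne
  have h2 := hf e' he'
  rw [← hee] at h2
  exact hm.2 he he' hne (f e) (hf e he) h2

lemma le_mrank_of {α : Type*} (M : Matroid α) (X I : Set α) (hIX : I ⊆ X) (hI : M.Indep I)
    (hEfin : M.E.Finite) : I.ncard ≤ mrank M X := by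
  apply le_csSup
  · refine ⟨M.E.ncard, ?_⟩
    rintro n ⟨J, _, hJ, rfl⟩
    exact Set.ncard_le_ncard hJ.subset_ground hEfin
  · exact ⟨I, hIX, hI, rfl⟩

lemma mrank_le_of {α : Type*} (M : Matroid α) (X : Set α) (k : ℕ)
    (h0 : M.Indep ∅) (h : ∀ I ⊆ X, M.Indep I → I.ncard ≤ k) : mrank M X ≤ k := by
  apply csSup_le
  · exact ⟨0, ∅, Set.empty_subset _, h0, by simp⟩
  · rintro n ⟨I, hIX, hI, rfl⟩
    exact h I hIX hI

lemma indep_card_le {α : Type*} (G : SimpleGraph α) (A B : Set α)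
    (hfin : (A ∪ B).Finite) (hAB : Disjoint A B) {X : Set α} (hXE : X ⊆ A ∪ B)
    (hm : ∃ m, CertifiesIndep G A B X m) : X.ncard ≤ B.ncard := by
  obtain ⟨m, hmm, hmfin, hmcard, hmsp⟩ := hm
  have hBfin : B.Finite := hfin.subset subset_union_right
  have hXfin : X.Finite := hfin.subset hXE
  rcases isEmpty_or_nonempty α with hα | hα
  · simp [Set.eq_empty_of_isEmpty X]
  choose! a b ha hb heq using hmsp
  have hinj : Set.InjOn b m :=
    matching_inj hmm (fun e he => by
      have h2 := Sym2.mem_mk_right (a e) (b e)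
      rwa [← heq e he] at h2)
  have h1 : m.ncard ≤ (B \ X).ncard :=
    Set.ncard_le_ncard_of_injOn b hb hinj hBfin.diff
  have hXA : (X ∩ A).ncard ≤ (B \ X).ncard := hmcard ▸ h1
  have hXeq : (X ∩ A) ∪ (X ∩ B) = X := by
    rw [← Set.inter_union_distrib_left]
    exact Set.inter_eq_left.mpr hXE
  have hsplit : X.ncard = (X ∩ A).ncard + (X ∩ B).ncard := by
    calc X.ncard = ((X ∩ A) ∪ (X ∩ B)).ncard := by rw [hXeq]
      _ = (X ∩ A).ncard + (X ∩ B).ncard :=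
        Set.ncard_union_eq (hAB.mono Set.inter_subset_right Set.inter_subset_right)
          (hXfin.inter_of_left A) (hXfin.inter_of_left B)
  have hdiff : (B ∩ X).ncard + (B \ X).ncard = B.ncard :=
    Set.ncard_inter_add_ncard_diff_eq_ncard B X hBfin
  have hBX : (X ∩ B).ncard = (B ∩ X).ncard := by rw [Set.inter_comm]
  omega

lemma indep_aux {α : Type*} (G : SimpleGraph α) (A B : Set α) (hAB : Disjoint A B)
    (hBfin : B.Finite) (W W' : Set α) (hWW' : Disjoint W W')
    (M : Matroid α)
    (hInd : ∀ X ⊆ A ∪ B, (M.Indep X ↔ ∃ m, CertifiesIndep G A B X m))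
    (n : Set (Sym2 α)) (hn : IsGraphMatching G n) (hnfin : n.Finite)
    (fb fa : Sym2 α → α)
    (heq : ∀ e ∈ n, e = s(fb e, fa e))
    (hcase : ∀ e ∈ n, fb e ∈ B ∩ W' ∧ fa e ∈ A ∩ W)
    (hinj : Set.InjOn fa n) :
    M.Indep ((B ∩ W) ∪ fa '' n) ∧ ((B ∩ W) ∪ fa '' n) ⊆ W ∧
      ((B ∩ W) ∪ fa '' n).ncard = (B ∩ W).ncard + n.ncard := by
  set X := (B ∩ W) ∪ fa '' n with hX
  have hfaW : fa '' n ⊆ A ∩ W := by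
    rintro x ⟨e, he, rfl⟩
    exact (hcase e he).2
  have hXW : X ⊆ W :=
    Set.union_subset Set.inter_subset_right (hfaW.trans Set.inter_subset_right)
  have hXsub : X ⊆ A ∪ B :=
    Set.union_subset (Set.inter_subset_left.trans subset_union_right)
      ((hfaW.trans Set.inter_subset_left).trans subset_union_left)
  have hXA : X ∩ A = fa '' n := by
    rw [hX, Set.union_inter_distrib_right, (hAB.symm.mono_left Set.inter_subset_left).inter_eq,
      Set.inter_eq_left.mpr (hfaW.trans Set.inter_subset_left), Set.empty_union]
  have hdisj2 : Disjoint (B ∩ W) (fa '' n) :=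
    hAB.symm.mono Set.inter_subset_left (hfaW.trans Set.inter_subset_left)
  refine ⟨?_, hXW, ?_⟩
  · rw [hInd X hXsub]
    refine ⟨n, hn, hnfin, ?_, ?_⟩
    · rw [hXA, Set.ncard_image_of_injOn hinj]
    · intro e he
      refine ⟨fa e, fb e, ?_, ⟨(hcase e he).1.1, ?_⟩, ?_⟩
      · rw [hXA]; exact ⟨e, he, rfl⟩
      · intro hbX
        exact Set.disjoint_left.mp hWW' (hXW hbX) (hcase e he).1.2
      · rw [Sym2.eq_swap]; exact heq e he
  · rw [hX, Set.ncard_union_eq hdisj2 (hBfin.inter_of_left W) (hnfin.image fa),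
      Set.ncard_image_of_injOn hinj]

/-- every matching of the crossing subgraph H has at most λ edges. -/
theorem crossing_matching_small {α : Type*} (G : SimpleGraph α) (A B : Set α)
    (hfin : (A ∪ B).Finite) (hAB : Disjoint A B)
    (hbip : ∀ x y, G.Adj x y → (x ∈ A ∧ y ∈ B) ∨ (x ∈ B ∧ y ∈ A))
    (M : Matroid α) (hE : M.E = A ∪ B)
    (hInd : ∀ X ⊆ A ∪ B, (M.Indep X ↔ ∃ m, CertifiesIndep G A B X m))
    (l : ℕ) (hl : 0 < l) (U V : Set α)
    (hUV : U ∪ V = A ∪ B) (hdisj : Disjoint U V)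
    (hconn : connVal M U ≤ l) :
    ∀ m : Set (Sym2 α), IsGraphMatching G m →
      (∀ e ∈ m, ∃ x y, e = s(x, y) ∧
        ((x ∈ B ∩ U ∧ y ∈ A ∩ V) ∨ (x ∈ B ∩ V ∧ y ∈ A ∩ U))) →
      m.ncard ≤ l := by
  intro m hmatch hcross
  have hBfin : B.Finite := hfin.subset subset_union_right
  have hEfin : M.E.Finite := hE ▸ hfin
  have hVE : M.E \ U = V := by
    rw [hE, ← hUV]
    exact Set.union_diff_cancel_left (Set.disjoint_iff.mp hdisj)
  have hind0 : M.Indep ∅ := by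
    rw [hInd ∅ (Set.empty_subset _)]
    exact ⟨∅, ⟨Set.empty_subset _, Set.pairwise_empty _⟩, Set.finite_empty, by simp,
      fun e he => absurd he (Set.notMem_empty e)⟩
  rcases isEmpty_or_nonempty α with hα | hα
  · simp [Set.eq_empty_of_isEmpty m]
  choose! fb fa heq hcase using hcross
  have hfaA : ∀ e ∈ m, fa e ∈ A := fun e he => ((hcase e he).elim (fun h => h.2.1) fun h => h.2.1)
  have hfbB : ∀ e ∈ m, fb e ∈ B := fun e he => ((hcase e he).elim (fun h => h.1.1) fun h => h.1.1)
  have hmfin : m.Finite := by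
    apply Set.Finite.subset (Set.Finite.image (fun p : α × α => s(p.1, p.2)) (hfin.prod hfin))
    intro e he
    exact ⟨(fb e, fa e), ⟨Or.inr (hfbB e he), Or.inl (hfaA e he)⟩, (heq e he).symm⟩
  have hinjfa : Set.InjOn fa m :=
    matching_inj hmatch (fun e he => by
      have h2 := Sym2.mem_mk_right (fb e) (fa e)
      rwa [← heq e he] at h2)
  set mU : Set (Sym2 α) := {e ∈ m | fa e ∈ U} with hmUdef
  set mV : Set (Sym2 α) := {e ∈ m | fa e ∉ U} with hmVdef
  have hmUsub : mU ⊆ m := Set.sep_subset _ _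
  have hmVsub : mV ⊆ m := Set.sep_subset _ _
  have hcaseU : ∀ e ∈ mU, fb e ∈ B ∩ V ∧ fa e ∈ A ∩ U := by
    rintro e ⟨he, heU⟩
    rcases hcase e he with h | h
    · exact absurd heU (Set.disjoint_right.mp hdisj h.2.2)
    · exact ⟨h.1, h.2⟩
  have hcaseV : ∀ e ∈ mV, fb e ∈ B ∩ U ∧ fa e ∈ A ∩ V := by
    rintro e ⟨he, heU⟩
    rcases hcase e he with h | h
    · exact ⟨h.1, h.2⟩
    · exact absurd h.2.2 heU
  have hmatchU : IsGraphMatching G mU := ⟨hmUsub.trans hmatch.1, hmatch.2.mono hmUsub⟩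
  have hmatchV : IsGraphMatching G mV := ⟨hmVsub.trans hmatch.1, hmatch.2.mono hmVsub⟩
  obtain ⟨hIU, hIUsub, hIUcard⟩ := indep_aux G A B hAB hBfin U V hdisj M hInd mU hmatchU
    (hmfin.subset hmUsub) fb fa (fun e he => heq e (hmUsub he)) hcaseU (hinjfa.mono hmUsub)
  obtain ⟨hIV, hIVsub, hIVcard⟩ := indep_aux G A B hAB hBfin V U hdisj.symm M hInd mV hmatchV
    (hmfin.subset hmVsub) fb fa (fun e he => heq e (hmVsub he)) hcaseV (hinjfa.mono hmVsub)
  have hrU : (B ∩ U).ncard + mU.ncard ≤ mrank M U := by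
    have := le_mrank_of M U _ hIUsub hIU hEfin
    rwa [hIUcard] at this
  have hrV : (B ∩ V).ncard + mV.ncard ≤ mrank M V := by
    have := le_mrank_of M V _ hIVsub hIV hEfin
    rwa [hIVcard] at this
  have hrE : mrank M M.E ≤ B.ncard := by
    refine mrank_le_of M M.E B.ncard hind0 (fun I hIE hI => ?_)
    rw [hE] at hIE
    exact indep_card_le G A B hfin hAB hIE ((hInd I hIE).mp hI)
  have hBsplit : (B ∩ U).ncard + (B ∩ V).ncard = B.ncard := by
    have hBeq : (B ∩ U) ∪ (B ∩ V) = B := by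
      rw [← Set.inter_union_distrib_left, hUV]
      exact Set.inter_eq_left.mpr subset_union_right
    calc (B ∩ U).ncard + (B ∩ V).ncard = ((B ∩ U) ∪ (B ∩ V)).ncard :=
          (Set.ncard_union_eq (hdisj.mono Set.inter_subset_right Set.inter_subset_right)
            (hBfin.inter_of_left U) (hBfin.inter_of_left V)).symm
      _ = B.ncard := by rw [hBeq]
  have hmsplit : mU.ncard + mV.ncard = m.ncard := by
    have hmeq : mU ∪ mV = m := by
      ext e
      simp only [hmUdef, hmVdef, Set.mem_union, Set.mem_setOf_eq]
      tauto
    calc mU.ncard + mV.ncard = (mU ∪ mV).ncard :=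
          (Set.ncard_union_eq (by
            rw [Set.disjoint_left]
            rintro e ⟨_, h1⟩ ⟨_, h2⟩
            exact h2 h1) (hmfin.subset hmUsub) (hmfin.subset hmVsub)).symm
      _ = m.ncard := by rw [hmeq]
  unfold connVal at hconn
  rw [hVE] at hconn
  omega
end

section
/- Let G be a finite bipartite simple graph with bipartition (A, B), let M[G] be its fundamental transversal matroid, let (U, V) be a partition of A ∪ B, and let S be a vertex cover of the crossing subgraph H. Let X ⊆ U and Y ⊆ V be independent sets of M[G]. If X ∪ Y is independent in M[G], then there exist a matching M_X certifying the independence of X and a matching M_Y certifying the independence of Y such that the signatures 𝒞(X, M_X) and 𝒞(Y, M_Y) are compatible. -/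
open Set

/-- Signatures: the data (S₁, 𝒮₂, S₃, S₄). -/
structure Signature (α : Type*) where
  s1 : Set α
  s2 : Set (Set α)
  s3 : Set α
  s4 : Set α

/-- The signature 𝒞(X, m) of an independent set \`X ⊆ P\` with certifying matching \`m\`,
relative to the bipartition (A, B), the vertex cover \`S\`, and the partition \`{P, Q}\`. -/
def signatureOf {α : Type*} (G : SimpleGraph α) (A B S P Q X : Set α)
    (m : Set (Sym2 α)) : Signature α where
  s1 := {b | b ∈ B ∩ P ∩ S ∧ (b ∈ X ∨ ∃ e ∈ m, b ∈ e)}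
  s2 := {Z | Z ⊆ A ∩ Q ∩ S ∧ ∃ m' : Set (Sym2 α), IsGraphMatching G m' ∧ m ⊆ m' ∧
          (m' \ m).Finite ∧ (m' \ m).ncard = Z.ncard ∧
          ∀ e ∈ m' \ m, ∃ z b, z ∈ Z ∧ b ∈ (B ∩ P) \ (S ∪ X) ∧ e = s(z, b)}
  s3 := {a | a ∈ A ∩ P ∩ S ∧ ∃ b ∈ (B ∩ Q) \ S, s(a, b) ∈ m}
  s4 := {b | b ∈ B ∩ Q ∩ S ∧ ∃ a ∈ A ∩ P, s(a, b) ∈ m}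

/-- Compatibility of a signature of a subset of U with a signature of a subset of V. -/
def SigCompatible {α : Type*} (σ τ : Signature α) : Prop :=
  σ.s1 ∩ τ.s4 = ∅ ∧ τ.s3 ∈ σ.s2 ∧ σ.s3 ∈ τ.s2 ∧ σ.s4 ∩ τ.s1 = ∅

/-- \`S\` is a vertex cover of the crossing subgraph \`H\` determined by the partition (U, V). -/
def IsCrossingCover {α : Type*} (G : SimpleGraph α) (A B U V S : Set α) : Prop :=
  ∀ x y, G.Adj x y →
    ((x ∈ B ∩ U ∧ y ∈ A ∩ V) ∨ (x ∈ B ∩ V ∧ y ∈ A ∩ U)) → x ∈ S ∨ y ∈ S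

/-- if X ∪ Y is independent then there are certifying matchings whose
signatures are compatible. -/
theorem indep_union_exists_compatible_signatures {α : Type*}
(G : SimpleGraph α) (A B : Set α)
    (hfin : (A ∪ B).Finite) (hAB : Disjoint A B)
    (hbip : ∀ x y, G.Adj x y → (x ∈ A ∧ y ∈ B) ∨ (x ∈ B ∧ y ∈ A))
    (M : Matroid α) (hE : M.E = A ∪ B)
    (hInd : ∀ X ⊆ A ∪ B, (M.Indep X ↔ ∃ m, CertifiesIndep G A B X m))
    (U V : Set α) (hUV : U ∪ V = A ∪ B) (hdisj : Disjoint U V)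
    (S : Set α) (hS : IsCrossingCover G A B U V S)
    (X Y : Set α) (hXU : X ⊆ U) (hYV : Y ⊆ V)
    (hX : M.Indep X) (hY : M.Indep Y)
    (hXY : M.Indep (X ∪ Y)) :
    ∃ mX mY : Set (Sym2 α), CertifiesIndep G A B X mX ∧ CertifiesIndep G A B Y mY ∧
      SigCompatible (signatureOf G A B S U V X mX) (signatureOf G A B S V U Y mY) := by
  classical
  have hXsub : X ⊆ A ∪ B := by rw [← hUV]; exact hXU.trans subset_union_left
  have hYsub : Y ⊆ A ∪ B := by rw [← hUV]; exact hYV.trans subset_union_right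
  obtain ⟨m, ⟨hmsub, hmpair⟩, hmfin, hmcard, hmedge⟩ :=
    (hInd (X ∪ Y) (union_subset hXsub hYsub)).mp hXY
  have hmedge' : ∀ e : Sym2 α, ∃ a b : α,
      e ∈ m → a ∈ (X ∪ Y) ∩ A ∧ b ∈ B \ (X ∪ Y) ∧ e = s(a, b) := by
    intro e
    by_cases he : e ∈ m
    · obtain ⟨a, b, h1, h2, h3⟩ := hmedge e he
      exact ⟨a, b, fun _ => ⟨h1, h2, h3⟩⟩
    · induction e using Sym2.ind with
      | _ x y => exact ⟨x, x, fun h => absurd h he⟩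
  choose f g hfgh using hmedge'
  have hf : ∀ e ∈ m, f e ∈ (X ∪ Y) ∩ A := fun e he => (hfgh e he).1
  have hg : ∀ e ∈ m, g e ∈ B \ (X ∪ Y) := fun e he => (hfgh e he).2.1
  have hfg : ∀ e ∈ m, e = s(f e, g e) := fun e he => (hfgh e he).2.2
  have hdisjXY : ∀ x, x ∈ X → x ∈ Y → False := fun x hx hy =>
    Set.disjoint_left.mp hdisj (hXU hx) (hYV hy)
  have hAB' : ∀ x, x ∈ A → x ∈ B → False := fun x hx hy =>
    Set.disjoint_left.mp hAB hx hy
  have hfA : ∀ e ∈ m, f e ∈ A := fun e he => (hf e he).2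
  have hgB : ∀ e ∈ m, g e ∈ B := fun e he => (hg e he).1
  have hgn : ∀ e ∈ m, g e ∉ X ∪ Y := fun e he => (hg e he).2
  have hfe : ∀ e ∈ m, f e ∈ e := fun e he => by
    have h := Sym2.mem_mk_left (f e) (g e)
    rw [← hfg e he] at h
    exact h
  have huniq : ∀ e ∈ m, ∀ e' ∈ m, ∀ x, x ∈ e → x ∈ e' → e = e' := by
    intro e he e' he' x hx hx'
    by_contra hne
    exact hmpair he he' hne x hx hx'
  have hAend : ∀ e ∈ m, ∀ a, a ∈ A → a ∈ e → a = f e := by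
    intro e he a hA hae
    rw [hfg e he, Sym2.mem_iff] at hae
    rcases hae with rfl | rfl
    · rfl
    · exact absurd (hgB e he) fun hB => hAB' _ hA hB
  have hBend : ∀ e ∈ m, ∀ b, b ∈ B → b ∈ e → b = g e := by
    intro e he b hB hbe
    rw [hfg e he, Sym2.mem_iff] at hbe
    rcases hbe with rfl | rfl
    · exact absurd (hfA e he) fun hA => hAB' _ hA hB
    · rfl
  have hinj : Set.InjOn f m := fun e he e' he' h =>
    huniq e he e' he' (f e) (hfe e he) (h ▸ hfe e' he')
  have himg : f '' m = (X ∪ Y) ∩ A := by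
    apply Set.eq_of_subset_of_ncard_le
    · rintro _ ⟨e, he, rfl⟩; exact hf e he
    · rw [Set.ncard_image_of_injOn hinj, hmcard]
    · exact hfin.subset fun x hx => Or.inl hx.2
  have hsurj : ∀ a ∈ (X ∪ Y) ∩ A, ∃ e ∈ m, f e = a := by
    intro a ha
    rw [← himg] at ha
    obtain ⟨e, he, h⟩ := ha
    exact ⟨e, he, h⟩
  have himgW : ∀ W : Set α, W ⊆ X ∪ Y → f '' {e | e ∈ m ∧ f e ∈ W} = W ∩ A := by
    intro W hW
    ext a
    constructor
    · rintro ⟨e, ⟨he, hfW⟩, rfl⟩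
      exact ⟨hfW, hfA e he⟩
    · rintro ⟨haW, haA⟩
      obtain ⟨e, he, rfl⟩ := hsurj a ⟨hW haW, haA⟩
      exact ⟨e, ⟨he, haW⟩, rfl⟩
  have certW : ∀ W : Set α, W ⊆ X ∪ Y →
      CertifiesIndep G A B W {e | e ∈ m ∧ f e ∈ W} := by
    intro W hW
    refine ⟨⟨fun e he => hmsub he.1, hmpair.mono fun e he => he.1⟩,
      hmfin.subset fun e he => he.1, ?_, ?_⟩
    · rw [← himgW W hW, Set.ncard_image_of_injOn (hinj.mono fun e he => he.1)]
    · rintro e ⟨he, hfW⟩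
      exact ⟨f e, g e, ⟨hfW, hfA e he⟩, ⟨hgB e he, fun hgW => hgn e he (hW hgW)⟩, hfg e he⟩
  -- generic emptiness fact for the s1/s4 compatibility conditions
  have key14 : ∀ (W W' T T' C : Set α), T ⊆ B → W ⊆ X ∪ Y → (∀ x ∈ W, x ∉ W') →
      {b | b ∈ T ∧ (b ∈ W ∨ ∃ e ∈ {e | e ∈ m ∧ f e ∈ W}, b ∈ e)} ∩
        {b | b ∈ T' ∧ ∃ a ∈ C, s(a, b) ∈ {e | e ∈ m ∧ f e ∈ W'}} = ∅ := by
    intro W W' T T' C hT hWXY hWW'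
    apply Set.eq_empty_iff_forall_notMem.mpr
    rintro b ⟨⟨hbT, hb1⟩, -, a, -, hab_m, hab_f⟩
    have hbB : b ∈ B := hT hbT
    have hbe : b ∈ s(a, b) := Sym2.mem_mk_right a b
    have hbg : b = g s(a, b) := hBend _ hab_m b hbB hbe
    have hbn : b ∉ X ∪ Y := by rw [hbg]; exact hgn _ hab_m
    rcases hb1 with hbW | ⟨e, ⟨heW, hfW⟩, hbe'⟩
    · exact hbn (hWXY hbW)
    · have heq : e = s(a, b) := huniq e heW _ hab_m b hbe' hbe
      exact hWW' (f e) hfW (by rw [heq]; exact hab_f)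
  -- generic construction for the s2/s3 compatibility conditions
  have key2 : ∀ (W W' P P' : Set α), W ⊆ X ∪ Y → (∀ x ∈ W, x ∉ W') →
      ∃ m' : Set (Sym2 α), IsGraphMatching G m' ∧ {e | e ∈ m ∧ f e ∈ W} ⊆ m' ∧
        (m' \ {e | e ∈ m ∧ f e ∈ W}).Finite ∧
        (m' \ {e | e ∈ m ∧ f e ∈ W}).ncard =
          ({a | a ∈ A ∩ P' ∩ S ∧ ∃ b ∈ (B ∩ P) \ S,
            s(a, b) ∈ {e | e ∈ m ∧ f e ∈ W'}} : Set α).ncard ∧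
        ∀ e ∈ m' \ {e | e ∈ m ∧ f e ∈ W}, ∃ z b,
          z ∈ {a | a ∈ A ∩ P' ∩ S ∧ ∃ b ∈ (B ∩ P) \ S,
            s(a, b) ∈ {e | e ∈ m ∧ f e ∈ W'}} ∧
          b ∈ (B ∩ P) \ (S ∪ W) ∧ e = s(z, b) := by
    intro W W' P P' hW hWW'
    set Z : Set α := {a | a ∈ A ∩ P' ∩ S ∧ ∃ b ∈ (B ∩ P) \ S,
      s(a, b) ∈ {e | e ∈ m ∧ f e ∈ W'}} with hZdef
    have hZe : ∀ e ∈ m, f e ∈ Z → f e ∈ W' ∧ g e ∈ (B ∩ P) \ S := by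
      rintro e he ⟨hfAPS, b, hbBP, hab_m, hab_f⟩
      have heq : e = s(f e, b) := huniq e he _ hab_m (f e) (hfe e he) (Sym2.mem_mk_left _ _)
      have h1 : f e ∈ W' := by rw [← heq] at hab_f; exact hab_f
      have hbg : b = g e := hBend e he b hbBP.1.1 (by rw [heq]; exact Sym2.mem_mk_right _ _)
      exact ⟨h1, hbg ▸ hbBP⟩
    have hE0sub : {e | e ∈ m ∧ f e ∈ Z} ⊆ m := fun e he => he.1
    have hE0img : f '' {e | e ∈ m ∧ f e ∈ Z} = Z := by
      ext a
      constructor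
      · rintro ⟨e, ⟨he, hfZ⟩, rfl⟩
        exact hfZ
      · intro ha
        obtain ⟨haAPS, b, hb, habm, habf⟩ := ha
        have heq : a = f s(a, b) := hAend _ habm a haAPS.1.1 (Sym2.mem_mk_left _ _)
        exact ⟨s(a, b), ⟨habm, heq ▸ (⟨haAPS, b, hb, habm, habf⟩ : a ∈ Z)⟩, heq.symm⟩
    have hdiffeq : ({e | e ∈ m ∧ f e ∈ W} ∪ {e | e ∈ m ∧ f e ∈ Z}) \ {e | e ∈ m ∧ f e ∈ W}
        = {e | e ∈ m ∧ f e ∈ Z} := by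
      ext e
      simp only [Set.mem_diff, Set.mem_union, Set.mem_setOf_eq]
      constructor
      · rintro ⟨h1 | h1, h2⟩
        · exact absurd h1 h2
        · exact h1
      · intro h
        exact ⟨Or.inr h, fun h' => hWW' (f e) h'.2 (hZe e h.1 h.2).1⟩
    refine ⟨{e | e ∈ m ∧ f e ∈ W} ∪ {e | e ∈ m ∧ f e ∈ Z}, ⟨?_, ?_⟩,
      subset_union_left, ?_, ?_, ?_⟩
    · exact union_subset (fun e he => hmsub he.1) (fun e he => hmsub he.1)
    · exact hmpair.mono (union_subset (fun e he => he.1) (fun e he => he.1))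
    · rw [hdiffeq]; exact hmfin.subset hE0sub
    · rw [hdiffeq]
      conv_rhs => rw [← hE0img]
      rw [Set.ncard_image_of_injOn (hinj.mono hE0sub)]
    · intro e he
      rw [hdiffeq] at he
      obtain ⟨he_m, hfZ⟩ := he
      obtain ⟨hfW', hgBP⟩ := hZe e he_m hfZ
      refine ⟨f e, g e, hfZ, ⟨hgBP.1, ?_⟩, hfg e he_m⟩
      rintro (hgS | hgW)
      · exact hgBP.2 hgS
      · exact hgn e he_m (hW hgW)
  refine ⟨{e | e ∈ m ∧ f e ∈ X}, {e | e ∈ m ∧ f e ∈ Y},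
    certW X subset_union_left, certW Y subset_union_right, ?_, ?_, ?_, ?_⟩
  · exact key14 X Y (B ∩ U ∩ S) (B ∩ U ∩ S) (A ∩ V)
      (fun b hb => hb.1.1) subset_union_left hdisjXY
  · exact ⟨fun a ha => ha.1, key2 X Y U V subset_union_left hdisjXY⟩
  · exact ⟨fun a ha => ha.1, key2 Y X V U subset_union_right
      (fun x hx hy => hdisjXY x hy hx)⟩
  · rw [Set.inter_comm]
    exact key14 Y X (B ∩ V ∩ S) (B ∩ V ∩ S) (A ∩ U)
      (fun b hb => hb.1.1) subset_union_right (fun x hx hy => hdisjXY x hy hx)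
end

section
/- Let G be a finite bipartite simple graph with bipartition (A, B), let M[G] be its fundamental transversal matroid, let (U, V) be a partition of A ∪ B, and let S be a vertex cover of the crossing subgraph H. Let X ⊆ U and Y ⊆ V be independent sets of M[G]. If there exist a matching M_X certifying the independence of X and a matching M_Y certifying the independence of Y such that the signatures 𝒞(X, M_X) and 𝒞(Y, M_Y) are compatible, then X ∪ Y is independent in M[G]. -/
open Set

/-- if there are certifying matchings with compatible signatures then
X ∪ Y is independent. -/
theorem indep_union_of_compatible_signatures {α : Type*}
(G : SimpleGraph α) (A B : Set α)
    (hfin : (A ∪ B).Finite) (hAB : Disjoint A B)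
    (hbip : ∀ x y, G.Adj x y → (x ∈ A ∧ y ∈ B) ∨ (x ∈ B ∧ y ∈ A))
    (M : Matroid α) (hE : M.E = A ∪ B)
    (hInd : ∀ X ⊆ A ∪ B, (M.Indep X ↔ ∃ m, CertifiesIndep G A B X m))
    (U V : Set α) (hUV : U ∪ V = A ∪ B) (hdisj : Disjoint U V)
    (S : Set α) (hS : IsCrossingCover G A B U V S)
    (X Y : Set α) (hXU : X ⊆ U) (hYV : Y ⊆ V)
    (hX : M.Indep X) (hY : M.Indep Y)
    (hcomp : ∃ mX mY : Set (Sym2 α), CertifiesIndep G A B X mX ∧ CertifiesIndep G A B Y mY ∧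
      SigCompatible (signatureOf G A B S U V X mX) (signatureOf G A B S V U Y mY)) :
    M.Indep (X ∪ Y) := by
  classical
  obtain ⟨mX, mY, cX, cY, compat⟩ := hcomp
  obtain ⟨h14, h23, h32, h41⟩ := compat
  obtain ⟨mXM, mXfin, mXcard, mXshape⟩ := cX
  obtain ⟨mYM, mYfin, mYcard, mYshape⟩ := cY
  obtain ⟨hT3sub, m', m'M, hmXm', RYfin, RYcard, RYshape⟩ := h23
  obtain ⟨hS3sub, m'', m''M, hmYm'', RXfin, RXcard, RXshape⟩ := h32
  set S3 : Set α := (signatureOf G A B S U V X mX).s3 with hS3def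
  set T3 : Set α := (signatureOf G A B S V U Y mY).s3 with hT3def
  have hS3mem : ∀ a, a ∈ S3 ↔ (a ∈ A ∩ U ∩ S ∧ ∃ b ∈ (B ∩ V) \ S, s(a, b) ∈ mX) :=
    fun a => Iff.rfl
  have hT3mem : ∀ a, a ∈ T3 ↔ (a ∈ A ∩ V ∩ S ∧ ∃ b ∈ (B ∩ U) \ S, s(a, b) ∈ mY) :=
    fun a => Iff.rfl
  -- compatibility of s1/s4 in explicit form
  have h14' : ∀ b, (b ∈ B ∩ U ∩ S ∧ (b ∈ X ∨ ∃ e ∈ mX, b ∈ e)) →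
      (b ∈ B ∩ U ∩ S ∧ ∃ a ∈ A ∩ V, s(a, b) ∈ mY) → False := by
    intro b h1 h4
    have hb : b ∈ (signatureOf G A B S U V X mX).s1 ∩ (signatureOf G A B S V U Y mY).s4 :=
      ⟨h1, h4⟩
    rw [h14] at hb
    exact hb
  have h41' : ∀ b, (b ∈ B ∩ V ∩ S ∧ ∃ a ∈ A ∩ U, s(a, b) ∈ mX) →
      (b ∈ B ∩ V ∩ S ∧ (b ∈ Y ∨ ∃ e ∈ mY, b ∈ e)) → False := by
    intro b h4 h1
    have hb : b ∈ (signatureOf G A B S U V X mX).s4 ∩ (signatureOf G A B S V U Y mY).s1 :=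
      ⟨h4, h1⟩
    rw [h41] at hb
    exact hb
  -- basic set facts
  have hXAB : X ⊆ A ∪ B := fun x hx => by rw [← hUV]; exact Or.inl (hXU hx)
  have hYAB : Y ⊆ A ∪ B := fun x hx => by rw [← hUV]; exact Or.inr (hYV hx)
  have hXY : Disjoint X Y := hdisj.mono hXU hYV
  have hABne : ∀ {x}, x ∈ A → x ∈ B → False := fun hx hy => Set.disjoint_left.mp hAB hx hy
  have hUVne : ∀ {x}, x ∈ U → x ∈ V → False := fun hx hy => Set.disjoint_left.mp hdisj hx hy
  have hUorV : ∀ {x}, x ∈ B → x ∈ U ∨ x ∈ V := by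
    intro x hx
    have : x ∈ U ∪ V := by rw [hUV]; exact Or.inr hx
    exact this
  -- matchings: unique edge through a vertex
  have huniq : ∀ {m : Set (Sym2 α)}, IsGraphMatching G m → ∀ {e g : Sym2 α}, e ∈ m → g ∈ m →
      ∀ {x}, x ∈ e → x ∈ g → e = g := by
    intro m hm e g he hg x hxe hxg
    by_contra hne
    exact hm.2 he hg hne x hxe hxg
  have hadjOf : ∀ {m : Set (Sym2 α)}, IsGraphMatching G m → ∀ {a b}, s(a, b) ∈ m → G.Adj a b := by
    intro m hm a b h
    exact (SimpleGraph.mem_edgeSet G).mp (hm.1 h)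
  -- crossing cover helpers
  have hcrossUV : ∀ a b, G.Adj a b → a ∈ A → a ∈ U → b ∈ B → b ∈ V → b ∈ S ∨ a ∈ S :=
    fun a b hadj hA hU hB hV => hS b a hadj.symm (Or.inr ⟨⟨hB, hV⟩, ⟨hA, hU⟩⟩)
  have hcrossVU : ∀ a b, G.Adj a b → a ∈ A → a ∈ V → b ∈ B → b ∈ U → b ∈ S ∨ a ∈ S :=
    fun a b hadj hA hV hB hU => hS b a hadj.symm (Or.inl ⟨⟨hB, hU⟩, ⟨hA, hV⟩⟩)
  -- S3 ⊆ X, T3 ⊆ Y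
  have hS3X : ∀ z ∈ S3, z ∈ X ∩ A := by
    intro z hz
    obtain ⟨⟨⟨hzA, _⟩, _⟩, b, _, hzb⟩ := (hS3mem z).mp hz
    obtain ⟨a', b', ha', hb', heq⟩ := mXshape _ hzb
    rcases Sym2.eq_iff.mp heq with ⟨h1, _⟩ | ⟨h1, _⟩
    · exact h1 ▸ ha'
    · exact absurd (h1 ▸ hb'.1) (fun h => hABne hzA h)
  have hT3Y : ∀ z ∈ T3, z ∈ Y ∩ A := by
    intro z hz
    obtain ⟨⟨⟨hzA, _⟩, _⟩, b, _, hzb⟩ := (hT3mem z).mp hz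
    obtain ⟨a', b', ha', hb', heq⟩ := mYshape _ hzb
    rcases Sym2.eq_iff.mp heq with ⟨h1, _⟩ | ⟨h1, _⟩
    · exact h1 ▸ ha'
    · exact absurd (h1 ▸ hb'.1) (fun h => hABne hzA h)
  -- the pieces of the final matching
  set KX : Set (Sym2 α) := {e | e ∈ mX ∧ ∀ a₀ ∈ S3, a₀ ∉ e} with hKXdef
  set KY : Set (Sym2 α) := {e | e ∈ mY ∧ ∀ a₀ ∈ T3, a₀ ∉ e} with hKYdef
  set RX : Set (Sym2 α) := m'' \ mY with hRXdef
  set RY : Set (Sym2 α) := m' \ mX with hRYdef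
  set N : Set (Sym2 α) := (KX ∪ RY) ∪ (KY ∪ RX) with hNdef
  have hKXmX : KX ⊆ mX := fun e he => he.1
  have hKYmY : KY ⊆ mY := fun e he => he.1
  have hKXm' : KX ⊆ m' := fun e he => hmXm' he.1
  have hKYm'' : KY ⊆ m'' := fun e he => hmYm'' he.1
  have hRYm' : RY ⊆ m' := fun e he => he.1
  have hRXm'' : RX ⊆ m'' := fun e he => he.1
  -- key lemma: kept mX-edge whose B-endpoint lies in V
  have keptXV : ∀ a b, s(a, b) ∈ mX → (∀ a₀ ∈ S3, a₀ ∉ s(a, b)) → a ∈ X ∩ A → b ∈ B →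
      b ∈ V → b ∈ S ∧ b ∉ Y ∧ ∀ g ∈ mY, b ∉ g := by
    intro a b hm hkept ha hB hV
    have haU : a ∈ U := hXU ha.1
    have hadj : G.Adj a b := hadjOf mXM hm
    have hbS : b ∈ S := by
      rcases hcrossUV a b hadj ha.2 haU hB hV with h | h
      · exact h
      · by_contra hbS'
        exact hkept a ((hS3mem a).mpr ⟨⟨⟨ha.2, haU⟩, h⟩, b, ⟨⟨hB, hV⟩, hbS'⟩, hm⟩)
          (Sym2.mem_iff.mpr (Or.inl rfl))
    have hs4 : b ∈ B ∩ V ∩ S ∧ ∃ a₀ ∈ A ∩ U, s(a₀, b) ∈ mX :=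
      ⟨⟨⟨hB, hV⟩, hbS⟩, a, ⟨ha.2, haU⟩, hm⟩
    refine ⟨hbS, ?_, ?_⟩
    · intro hbY
      exact h41' b hs4 ⟨⟨⟨hB, hV⟩, hbS⟩, Or.inl hbY⟩
    · intro g hg hbg
      exact h41' b hs4 ⟨⟨⟨hB, hV⟩, hbS⟩, Or.inr ⟨g, hg, hbg⟩⟩
  -- key lemma: kept mY-edge whose B-endpoint lies in U
  have keptYU : ∀ a b, s(a, b) ∈ mY → (∀ a₀ ∈ T3, a₀ ∉ s(a, b)) → a ∈ Y ∩ A → b ∈ B →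
      b ∈ U → b ∈ S ∧ b ∉ X ∧ ∀ g ∈ mX, b ∉ g := by
    intro a b hm hkept ha hB hU
    have haV : a ∈ V := hYV ha.1
    have hadj : G.Adj a b := hadjOf mYM hm
    have hbS : b ∈ S := by
      rcases hcrossVU a b hadj ha.2 haV hB hU with h | h
      · exact h
      · by_contra hbS'
        exact hkept a ((hT3mem a).mpr ⟨⟨⟨ha.2, haV⟩, h⟩, b, ⟨⟨hB, hU⟩, hbS'⟩, hm⟩)
          (Sym2.mem_iff.mpr (Or.inl rfl))
    have hs4 : b ∈ B ∩ U ∩ S ∧ ∃ a₀ ∈ A ∩ V, s(a₀, b) ∈ mY :=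
      ⟨⟨⟨hB, hU⟩, hbS⟩, a, ⟨ha.2, haV⟩, hm⟩
    refine ⟨hbS, ?_, ?_⟩
    · intro hbX
      exact h14' b ⟨⟨⟨hB, hU⟩, hbS⟩, Or.inl hbX⟩ hs4
    · intro g hg hbg
      exact h14' b ⟨⟨⟨hB, hU⟩, hbS⟩, Or.inr ⟨g, hg, hbg⟩⟩ hs4
  -- shape of edges in each piece
  have shapeKX : ∀ e ∈ KX, ∃ a b, a ∈ X ∩ A ∧ b ∈ B \ (X ∪ Y) ∧ e = s(a, b) := by
    intro e he
    obtain ⟨a, b, ha, hb, rfl⟩ := mXshape e he.1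
    have hbY : b ∉ Y := by
      rcases hUorV hb.1 with hU | hV
      · exact fun hbY => hUVne hU (hYV hbY)
      · exact (keptXV a b he.1 he.2 ha hb.1 hV).2.1
    exact ⟨a, b, ha, ⟨hb.1, fun h => h.elim hb.2 hbY⟩, rfl⟩
  have shapeKY : ∀ e ∈ KY, ∃ a b, a ∈ Y ∩ A ∧ b ∈ B \ (X ∪ Y) ∧ e = s(a, b) := by
    intro e he
    obtain ⟨a, b, ha, hb, rfl⟩ := mYshape e he.1
    have hbX : b ∉ X := by
      rcases hUorV hb.1 with hU | hV
      · exact (keptYU a b he.1 he.2 ha hb.1 hU).2.1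
      · exact fun hbX => hUVne (hXU hbX) hV
    exact ⟨a, b, ha, ⟨hb.1, fun h => h.elim hbX hb.2⟩, rfl⟩
  have shapeRX : ∀ e ∈ RX, ∃ z b, z ∈ S3 ∧ b ∈ (B ∩ V) \ (S ∪ Y) ∧ e = s(z, b) := RXshape
  have shapeRY : ∀ e ∈ RY, ∃ z b, z ∈ T3 ∧ b ∈ (B ∩ U) \ (S ∪ X) ∧ e = s(z, b) := RYshape
  have shapeN : ∀ e ∈ N, ∃ a b, a ∈ (X ∪ Y) ∩ A ∧ b ∈ B \ (X ∪ Y) ∧ e = s(a, b) := by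
    intro e he
    rcases he with (he | he) | (he | he)
    · obtain ⟨a, b, ha, hb, rfl⟩ := shapeKX e he
      exact ⟨a, b, ⟨Or.inl ha.1, ha.2⟩, hb, rfl⟩
    · obtain ⟨z, b, hz, hb, rfl⟩ := shapeRY e he
      have hzY := hT3Y z hz
      refine ⟨z, b, ⟨Or.inr hzY.1, hzY.2⟩, ⟨hb.1.1, ?_⟩, rfl⟩
      intro h
      rcases h with h | h
      · exact hb.2 (Or.inr h)
      · exact hUVne hb.1.2 (hYV h)
    · obtain ⟨a, b, ha, hb, rfl⟩ := shapeKY e he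
      exact ⟨a, b, ⟨Or.inr ha.1, ha.2⟩, hb, rfl⟩
    · obtain ⟨z, b, hz, hb, rfl⟩ := shapeRX e he
      have hzX := hS3X z hz
      refine ⟨z, b, ⟨Or.inl hzX.1, hzX.2⟩, ⟨hb.1.1, ?_⟩, rfl⟩
      intro h
      rcases h with h | h
      · exact hUVne (hXU h) hb.1.2
      · exact hb.2 (Or.inr h)
  -- cross non-sharing between the two sides
  have cross : ∀ e ∈ KX ∪ RY, ∀ g ∈ KY ∪ RX, ∀ x, x ∈ e → x ∈ g → False := by
    rintro e (he | he) g (hg | hg) x hxe hxg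
    · -- KX vs KY
      obtain ⟨a, b, ha, hb, heq⟩ := mXshape e he.1
      obtain ⟨a', b', ha', hb', heq'⟩ := mYshape g hg.1
      rw [heq] at hxe; rw [heq'] at hxg
      rcases Sym2.mem_iff.mp hxe with h1 | h1 <;> rcases Sym2.mem_iff.mp hxg with h2 | h2
      · exact Set.disjoint_left.mp hXY ha.1 (by rw [h1.symm.trans h2]; exact ha'.1)
      · exact hABne ha.2 (by rw [h1.symm.trans h2]; exact hb'.1)
      · exact hABne ha'.2 (by rw [h2.symm.trans h1]; exact hb.1)
      · have hbb : b = b' := h1.symm.trans h2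
        rcases hUorV hb.1 with hU | hV
        · refine (keptYU a' b' (heq' ▸ hg.1) ?_ ha' hb'.1 (by rw [← hbb]; exact hU)).2.2 _ he.1 ?_
          · intro a₀ ha₀ hmem
            exact hg.2 a₀ ha₀ (by rw [heq']; exact hmem)
          · rw [heq, hbb]
            exact Sym2.mem_iff.mpr (Or.inr rfl)
        · refine (keptXV a b (heq ▸ he.1) ?_ ha hb.1 hV).2.2 _ hg.1 ?_
          · intro a₀ ha₀ hmem
            exact he.2 a₀ ha₀ (by rw [heq]; exact hmem)
          · rw [heq', ← hbb]
            exact Sym2.mem_iff.mpr (Or.inr rfl)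
    · -- KX vs RX
      obtain ⟨a, b, ha, hb, heq⟩ := mXshape e he.1
      obtain ⟨z, b'', hz, hb'', heq'⟩ := shapeRX g hg
      have hzA : z ∈ A := ((hS3mem z).mp hz).1.1.1
      rw [heq] at hxe; rw [heq'] at hxg
      rcases Sym2.mem_iff.mp hxe with h1 | h1 <;> rcases Sym2.mem_iff.mp hxg with h2 | h2
      · refine he.2 a (by rw [h1.symm.trans h2]; exact hz) ?_
        rw [heq]; exact Sym2.mem_iff.mpr (Or.inl rfl)
      · exact hABne ha.2 (by rw [h1.symm.trans h2]; exact hb''.1.1)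
      · exact hABne hzA (by rw [h2.symm.trans h1]; exact hb.1)
      · have hbb : b = b'' := h1.symm.trans h2
        rcases hUorV hb.1 with hU | hV
        · exact hUVne (by rw [← hbb]; exact hU) hb''.1.2
        · refine hb''.2 (Or.inl ?_)
          have hkept : ∀ a₀ ∈ S3, a₀ ∉ s(a, b) := by
            intro a₀ ha₀ hmem
            exact he.2 a₀ ha₀ (by rw [heq]; exact hmem)
          rw [← hbb]
          exact (keptXV a b (heq ▸ he.1) hkept ha hb.1 hV).1
    · -- RY vs KY
      obtain ⟨z, b'', hz, hb'', heq⟩ := shapeRY e he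
      obtain ⟨a', b', ha', hb', heq'⟩ := mYshape g hg.1
      have hzA : z ∈ A := ((hT3mem z).mp hz).1.1.1
      rw [heq] at hxe; rw [heq'] at hxg
      rcases Sym2.mem_iff.mp hxe with h1 | h1 <;> rcases Sym2.mem_iff.mp hxg with h2 | h2
      · refine hg.2 z hz ?_
        rw [heq', ← h1.symm.trans h2]; exact Sym2.mem_iff.mpr (Or.inl rfl)
      · exact hABne hzA (by rw [h1.symm.trans h2]; exact hb'.1)
      · exact hABne ha'.2 (by rw [h2.symm.trans h1]; exact hb''.1.1)
      · have hbb : b'' = b' := h1.symm.trans h2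
        rcases hUorV hb'.1 with hU | hV
        · refine hb''.2 (Or.inl ?_)
          have hkept : ∀ a₀ ∈ T3, a₀ ∉ s(a', b') := by
            intro a₀ ha₀ hmem
            exact hg.2 a₀ ha₀ (by rw [heq']; exact hmem)
          rw [hbb]
          exact (keptYU a' b' (heq' ▸ hg.1) hkept ha' hb'.1 hU).1
        · exact hUVne hb''.1.2 (by rw [hbb]; exact hV)
    · -- RY vs RX
      obtain ⟨z, b, hz, hb, heq⟩ := shapeRY e he
      obtain ⟨z', b', hz', hb', heq'⟩ := shapeRX g hg
      have hzm := (hT3mem z).mp hz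
      have hz'm := (hS3mem z').mp hz'
      rw [heq] at hxe; rw [heq'] at hxg
      rcases Sym2.mem_iff.mp hxe with h1 | h1 <;> rcases Sym2.mem_iff.mp hxg with h2 | h2
      · exact hUVne (by rw [h1.symm.trans h2]; exact hz'm.1.1.2) hzm.1.1.2
      · exact hABne hzm.1.1.1 (by rw [h1.symm.trans h2]; exact hb'.1.1)
      · exact hABne hz'm.1.1.1 (by rw [h2.symm.trans h1]; exact hb.1.1)
      · exact hUVne hb.1.2 (by rw [h1.symm.trans h2]; exact hb'.1.2)
  have noShare : ∀ e ∈ N, ∀ g ∈ N, ∀ x, x ∈ e → x ∈ g → e = g := by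
    intro e he g hg x hxe hxg
    have hsub1 : KX ∪ RY ⊆ m' := Set.union_subset hKXm' hRYm'
    have hsub2 : KY ∪ RX ⊆ m'' := Set.union_subset hKYm'' hRXm''
    rcases he with he | he <;> rcases hg with hg | hg
    · exact huniq m'M (hsub1 he) (hsub1 hg) hxe hxg
    · exact (cross e he g hg x hxe hxg).elim
    · exact (cross g hg e he x hxg hxe).elim
    · exact huniq m''M (hsub2 he) (hsub2 hg) hxe hxg
  -- N is a matching of G
  have hNedge : N ⊆ G.edgeSet := by
    intro e he
    rcases he with (he | he) | (he | he)
    · exact mXM.1 (hKXmX he)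
    · exact m'M.1 (hRYm' he)
    · exact mYM.1 (hKYmY he)
    · exact m''M.1 (hRXm'' he)
  have hNM : IsGraphMatching G N := by
    refine ⟨hNedge, ?_⟩
    intro e he g hg hne x hxe hxg
    exact hne (noShare e he g hg x hxe hxg)
  have hNfin : N.Finite :=
    ((mXfin.subset hKXmX).union RYfin).union ((mYfin.subset hKYmY).union RXfin)
  -- A-endpoint function
  set f : Sym2 α → α := fun e => if h : ∃ a, a ∈ A ∧ a ∈ e then h.choose else (Quot.out e).1
    with hfdef
  have hfA : ∀ (a b : α), a ∈ A → b ∈ B → f s(a, b) = a := by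
    intro a b ha hb
    have hex : ∃ x, x ∈ A ∧ x ∈ s(a, b) := ⟨a, ha, Sym2.mem_iff.mpr (Or.inl rfl)⟩
    have : f s(a, b) = hex.choose := by rw [hfdef]; exact dif_pos hex
    rw [this]
    have hc := hex.choose_spec
    rcases Sym2.mem_iff.mp hc.2 with h | h
    · exact h
    · exact absurd (h ▸ hc.1) (fun hh => hABne hh hb)
  -- coverage helper
  have himg : ∀ (m : Set (Sym2 α)), IsGraphMatching G m → ∀ (T : Set α),
      (∀ e ∈ m, ∃ a b, a ∈ A ∧ b ∈ B ∧ a ∈ T ∧ e = s(a, b)) → m.ncard = T.ncard →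
      T.Finite → T ⊆ f '' m := by
    intro m hm T hsh hcard hTfin
    have hfe : ∀ e ∈ m, f e ∈ e ∧ f e ∈ T := by
      intro e he
      obtain ⟨a, b, hA, hB, hT, rfl⟩ := hsh e he
      rw [hfA a b hA hB]
      exact ⟨Sym2.mem_iff.mpr (Or.inl rfl), hT⟩
    have hmap : f '' m ⊆ T := by
      rintro _ ⟨e, he, rfl⟩
      exact (hfe e he).2
    have hinj : Set.InjOn f m := by
      intro e he g hg hEq
      refine huniq hm he hg (hfe e he).1 ?_
      rw [hEq]
      exact (hfe g hg).1
    have heq : f '' m = T := by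
      refine Set.eq_of_subset_of_ncard_le hmap ?_ hTfin
      rw [Set.ncard_image_of_injOn hinj, hcard]
    exact heq.symm.subset
  -- each piece's matching structure & shape for himg
  have hRXM : IsGraphMatching G RX := ⟨fun e he => m''M.1 he.1, m''M.2.mono Set.diff_subset⟩
  have hRYM : IsGraphMatching G RY := ⟨fun e he => m'M.1 he.1, m'M.2.mono Set.diff_subset⟩
  have hS3fin : S3.Finite := hfin.subset (fun z hz => Or.inl ((hS3mem z).mp hz).1.1.1)
  have hT3fin : T3.Finite := hfin.subset (fun z hz => Or.inl ((hT3mem z).mp hz).1.1.1)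
  have hXAfin : (X ∩ A).Finite := hfin.subset (fun x hx => Or.inl hx.2)
  have hYAfin : (Y ∩ A).Finite := hfin.subset (fun x hx => Or.inl hx.2)
  have hcovmX : X ∩ A ⊆ f '' mX := by
    refine himg mX mXM (X ∩ A) ?_ mXcard hXAfin
    intro e he
    obtain ⟨a, b, ha, hb, rfl⟩ := mXshape e he
    exact ⟨a, b, ha.2, hb.1, ha, rfl⟩
  have hcovmY : Y ∩ A ⊆ f '' mY := by
    refine himg mY mYM (Y ∩ A) ?_ mYcard hYAfin
    intro e he
    obtain ⟨a, b, ha, hb, rfl⟩ := mYshape e he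
    exact ⟨a, b, ha.2, hb.1, ha, rfl⟩
  have hcovRX : S3 ⊆ f '' RX := by
    refine himg RX hRXM S3 ?_ RXcard hS3fin
    intro e he
    obtain ⟨z, b, hz, hb, rfl⟩ := shapeRX e he
    exact ⟨z, b, ((hS3mem z).mp hz).1.1.1, hb.1.1, hz, rfl⟩
  have hcovRY : T3 ⊆ f '' RY := by
    refine himg RY hRYM T3 ?_ RYcard hT3fin
    intro e he
    obtain ⟨z, b, hz, hb, rfl⟩ := shapeRY e he
    exact ⟨z, b, ((hT3mem z).mp hz).1.1.1, hb.1.1, hz, rfl⟩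
  -- full coverage of (X ∪ Y) ∩ A by N
  have hcovN : (X ∪ Y) ∩ A ⊆ f '' N := by
    rintro a ⟨(haX | haY), haA⟩
    · by_cases hz : a ∈ S3
      · obtain ⟨e, he, hfe⟩ := hcovRX hz
        exact ⟨e, Or.inr (Or.inr he), hfe⟩
      · obtain ⟨e, he, hfe⟩ := hcovmX ⟨haX, haA⟩
        refine ⟨e, Or.inl (Or.inl ⟨he, ?_⟩), hfe⟩
        intro a₀ ha₀ ha₀e
        obtain ⟨a', b', ha', hb', rfl⟩ := mXshape e he
        rw [hfA a' b' ha'.2 hb'.1] at hfe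
        rcases Sym2.mem_iff.mp ha₀e with h | h
        · rw [h, hfe] at ha₀
          exact hz ha₀
        · rw [h] at ha₀
          exact hABne ((hS3mem b').mp ha₀).1.1.1 hb'.1
    · by_cases hz : a ∈ T3
      · obtain ⟨e, he, hfe⟩ := hcovRY hz
        exact ⟨e, Or.inl (Or.inr he), hfe⟩
      · obtain ⟨e, he, hfe⟩ := hcovmY ⟨haY, haA⟩
        refine ⟨e, Or.inr (Or.inl ⟨he, ?_⟩), hfe⟩
        intro a₀ ha₀ ha₀e
        obtain ⟨a', b', ha', hb', rfl⟩ := mYshape e he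
        rw [hfA a' b' ha'.2 hb'.1] at hfe
        rcases Sym2.mem_iff.mp ha₀e with h | h
        · rw [h, hfe] at ha₀
          exact hz ha₀
        · rw [h] at ha₀
          exact hABne ((hT3mem b').mp ha₀).1.1.1 hb'.1
  have hmapN : f '' N ⊆ (X ∪ Y) ∩ A := by
    rintro _ ⟨e, he, rfl⟩
    obtain ⟨a, b, ha, hb, rfl⟩ := shapeN e he
    rw [hfA a b ha.2 hb.1]
    exact ha
  have hinjN : Set.InjOn f N := by
    intro e he g hg hEq
    have hfe : ∀ e ∈ N, f e ∈ e := by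
      intro e he
      obtain ⟨a, b, ha, hb, rfl⟩ := shapeN e he
      rw [hfA a b ha.2 hb.1]
      exact Sym2.mem_iff.mpr (Or.inl rfl)
    refine noShare e he g hg (f e) (hfe e he) ?_
    rw [hEq]
    exact hfe g hg
  have hNcard : N.ncard = ((X ∪ Y) ∩ A).ncard := by
    rw [← Set.ncard_image_of_injOn hinjN]
    congr 1
    exact Set.Subset.antisymm hmapN hcovN
  -- conclude
  have hXYAB : X ∪ Y ⊆ A ∪ B := Set.union_subset hXAB hYAB
  rw [hInd (X ∪ Y) hXYAB]
  refine ⟨N, hNM, hNfin, hNcard, ?_⟩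
  intro e he
  obtain ⟨a, b, ha, hb, rfl⟩ := shapeN e he
  exact ⟨a, b, ha, hb, rfl⟩
end
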